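/- arXiv:1012.5364 — 3 statements merged into one kernel-verified Lean document; each statement's English description precedes it below -/
import Mathlib

section
/- Let N ≥ 1 be an integer, let n > max(N−2, 0) be a real number, let R > 0, K > 0, γ > 1, M > 0. Suppose ρ, V : [0,∞) × [0,∞) → ℝ are C¹ functions such that: (i) ρ(t,r) ≥ 0 for all t, r; (ii) ρ(t,r) = 0 and V(t,r) = 0 whenever r ≥ R (compact support / non-slip boundary condition); (iii) for every t ≥ 0, α(N)·∫₀^R ρ(t,s) s^{N−1} ds = M (conservation of the total mass M); (iv) for each t ≥ 0 the map r ↦ ρ(t,r)^{γ−1} is differentiable on (0,R), and for all t ≥ 0 and 0 < r < R the radial momentum equation with attractive force holds: ∂ₜV(t,r) + V(t,r)·∂ᵣV(t,r) + (Kγ/(γ−1))·∂ᵣ(ρ(t,r)^{γ−1}) = −α(N)·r^{1−N}·∫₀^r ρ(t,s) s^{N−1} ds; (v) the initial velocity satisfies H₀ := ∫₀^R r^n V(0,r) dr > √(2 R^{2n−N+4} M / (n(n+1)(n−N+2))). Then no such global-in-time solution exists, i.e., these hypotheses lead to a contradiction (the solution must blow up before a finite time T). -/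
open Set MeasureTheory Filter Topology intervalIntegral

namespace BlowupAux

/-- The quadrant. -/
def Q : Set (ℝ × ℝ) := Set.Ici 0 ×ˢ Set.Ici 0

lemma uniqueDiffQ : UniqueDiffOn ℝ Q := (uniqueDiffOn_Ici 0).prod (uniqueDiffOn_Ici 0)

lemma mem_Q {t r : ℝ} (ht : 0 ≤ t) (hr : 0 ≤ r) : (t, r) ∈ Q := ⟨ht, hr⟩

/-- partial derivative in the first variable, as `fderivWithin` along the quadrant. -/
noncomputable def pt (f : ℝ → ℝ → ℝ) (p : ℝ × ℝ) : ℝ :=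
  fderivWithin ℝ (Function.uncurry f) Q p (1, 0)

/-- partial derivative in the second variable. -/
noncomputable def pr (f : ℝ → ℝ → ℝ) (p : ℝ × ℝ) : ℝ :=
  fderivWithin ℝ (Function.uncurry f) Q p (0, 1)

variable {f : ℝ → ℝ → ℝ}

lemma contOn_pt (hf : ContDiffOn ℝ 1 (Function.uncurry f) Q) : ContinuousOn (pt f) Q :=
  (hf.continuousOn_fderivWithin uniqueDiffQ le_rfl).clm_apply continuousOn_const

lemma contOn_pr (hf : ContDiffOn ℝ 1 (Function.uncurry f) Q) : ContinuousOn (pr f) Q :=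
  (hf.continuousOn_fderivWithin uniqueDiffQ le_rfl).clm_apply continuousOn_const

lemma hasDerivAt_fst (hf : ContDiffOn ℝ 1 (Function.uncurry f) Q) {t r : ℝ}
    (ht : 0 < t) (hr : 0 ≤ r) : HasDerivAt (fun τ => f τ r) (pt f (t, r)) t := by
  have hmem : (t, r) ∈ Q := mem_Q ht.le hr
  have hF : HasFDerivWithinAt (Function.uncurry f)
      (fderivWithin ℝ (Function.uncurry f) Q (t, r)) Q (t, r) :=
    ((hf.differentiableOn one_ne_zero) _ hmem).hasFDerivWithinAt
  have hc : HasDerivWithinAt (fun τ : ℝ => ((τ, r) : ℝ × ℝ)) ((1 : ℝ), (0 : ℝ)) (Ici 0) t :=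
    ((hasDerivAt_id t).prodMk (hasDerivAt_const t r)).hasDerivWithinAt
  have hcomp := hF.comp_hasDerivWithinAt t hc (fun τ (hτ : τ ∈ Ici (0:ℝ)) => mem_Q hτ hr)
  exact (hcomp.hasDerivAt (Ici_mem_nhds ht) : HasDerivAt (fun τ => f τ r) _ t)

lemma hasDerivAt_snd (hf : ContDiffOn ℝ 1 (Function.uncurry f) Q) {t r : ℝ}
    (ht : 0 ≤ t) (hr : 0 < r) : HasDerivAt (fun s => f t s) (pr f (t, r)) r := by
  have hmem : (t, r) ∈ Q := mem_Q ht hr.le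
  have hF : HasFDerivWithinAt (Function.uncurry f)
      (fderivWithin ℝ (Function.uncurry f) Q (t, r)) Q (t, r) :=
    ((hf.differentiableOn one_ne_zero) _ hmem).hasFDerivWithinAt
  have hc : HasDerivWithinAt (fun s : ℝ => ((t, s) : ℝ × ℝ)) ((0 : ℝ), (1 : ℝ)) (Ici 0) r :=
    ((hasDerivAt_const r t).prodMk (hasDerivAt_id r)).hasDerivWithinAt
  have hcomp := hF.comp_hasDerivWithinAt r hc (fun s (hs : s ∈ Ici (0:ℝ)) => mem_Q ht hs)
  exact (hcomp.hasDerivAt (Ici_mem_nhds hr) : HasDerivAt (fun s => f t s) _ r)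

lemma contOn_slice_r (hf : ContDiffOn ℝ 1 (Function.uncurry f) Q) {t : ℝ} (ht : 0 ≤ t) :
    ContinuousOn (fun r => f t r) (Ici 0) := by
  have : ContinuousOn (Function.uncurry f) Q := hf.continuousOn
  exact this.comp (Continuous.continuousOn (by fun_prop)) (fun r (hr : r ∈ Ici (0:ℝ)) => mem_Q ht hr)

lemma contOn_slice_t (hf : ContDiffOn ℝ 1 (Function.uncurry f) Q) {r : ℝ} (hr : 0 ≤ r) :
    ContinuousOn (fun t => f t r) (Ici 0) := by
  have : ContinuousOn (Function.uncurry f) Q := hf.continuousOn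
  exact this.comp (Continuous.continuousOn (by fun_prop)) (fun t (ht : t ∈ Ici (0:ℝ)) => mem_Q ht hr)

end BlowupAux

namespace BlowupAux

lemma growth_lemma {f d : ℝ → ℝ} {t₀ ε κ : ℝ} (hκ : 0 < κ)
    (hcont : ContinuousOn f (Ici t₀))
    (hd : ∀ t ∈ Ioi t₀, HasDerivAt f (d t) t)
    (hineq : ∀ t ∈ Ioi t₀, ε + κ * (f t - f t₀) ≤ d t) :
    ∀ t ∈ Ici t₀, f t₀ - ε / κ + (ε / κ) * Real.exp (κ * (t - t₀)) ≤ f t := by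
  set G : ℝ → ℝ := fun t => (f t - f t₀ + ε / κ) * Real.exp (-κ * (t - t₀)) with hG
  have hGd : ∀ t ∈ Ioi t₀, HasDerivAt G
      ((d t) * Real.exp (-κ * (t - t₀))
        + (f t - f t₀ + ε / κ) * (Real.exp (-κ * (t - t₀)) * (-κ * 1))) t := by
    intro t ht
    have h1 : HasDerivAt (fun t => f t - f t₀ + ε / κ) (d t) t :=
      ((hd t ht).sub_const _).add_const _
    have h2 : HasDerivAt (fun t : ℝ => -κ * (t - t₀)) (-κ * 1) t :=
      ((hasDerivAt_id t).sub_const t₀).const_mul (-κ)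
    exact h1.mul h2.exp
  have hGmono : MonotoneOn G (Ici t₀) := by
    apply monotoneOn_of_deriv_nonneg (convex_Ici t₀)
    · exact ((hcont.sub continuousOn_const).add continuousOn_const).mul
        (Real.continuous_exp.comp (by fun_prop)).continuousOn
    · intro t ht
      rw [interior_Ici] at ht
      exact (hGd t ht).differentiableAt.differentiableWithinAt
    · intro t ht
      rw [interior_Ici] at ht
      rw [(hGd t ht).deriv]
      have hexp : 0 < Real.exp (-κ * (t - t₀)) := Real.exp_pos _
      have h3 := hineq t ht
      have h4 : Real.exp (-κ * (t - t₀)) * (ε + κ * (f t - f t₀))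
          ≤ Real.exp (-κ * (t - t₀)) * d t := mul_le_mul_of_nonneg_left h3 hexp.le
      have h5 : κ * (ε / κ) = ε := mul_div_cancel₀ ε (ne_of_gt hκ)
      nlinarith [h4, h5]
  intro t ht
  have hmo := hGmono (self_mem_Ici) ht ht
  have hG0 : G t₀ = ε / κ := by simp [hG]
  rw [hG0] at hmo
  have hexp : Real.exp (-κ * (t - t₀)) * Real.exp (κ * (t - t₀)) = 1 := by
    rw [← Real.exp_add]; ring_nf; exact Real.exp_zero
  have hexp2 : 0 < Real.exp (κ * (t - t₀)) := Real.exp_pos _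
  have h2 : (ε / κ) * Real.exp (κ * (t - t₀)) ≤ (f t - f t₀ + ε / κ) := by
    calc (ε / κ) * Real.exp (κ * (t - t₀))
        ≤ G t * Real.exp (κ * (t - t₀)) := mul_le_mul_of_nonneg_right hmo hexp2.le
      _ = (f t - f t₀ + ε / κ) * (Real.exp (-κ * (t - t₀)) * Real.exp (κ * (t - t₀))) := by
          rw [hG]; ring
      _ = f t - f t₀ + ε / κ := by rw [hexp, mul_one]
  linarith

lemma ode_blowup {H D : ℝ → ℝ} {c b : ℝ} (hc : 0 < c) (hb : 0 < b)
    (hHcont : ContinuousOn H (Ici 0))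
    (hD : ∀ t ∈ Ioi (0:ℝ), HasDerivAt H (D t) t)
    (hineq : ∀ t ∈ Ioi (0:ℝ), c * (H t) ^ 2 - b ≤ D t)
    (hH0pos : 0 < H 0) (hinit : b < c * (H 0) ^ 2) : False := by
  have hεpos : 0 < c * (H 0) ^ 2 - b := by linarith
  have hκpos : 0 < 2 * c * H 0 := by positivity
  have hgrow := growth_lemma (f := H) (d := D) (ε := c * (H 0) ^ 2 - b) hκpos hHcont hD
    (fun t ht => by
      have h := hineq t ht
      nlinarith [sq_nonneg (H t - H 0), hc.le])
  -- linear lower bound  H t ≥ H 0 + ε t  via exp x ≥ 1 + x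
  have hlin : ∀ t ∈ Ici (0:ℝ), H 0 + (c * (H 0) ^ 2 - b) * t ≤ H t := by
    intro t ht
    have h1 := hgrow t ht
    set ε := c * (H 0) ^ 2 - b with hεdef
    set κ := 2 * c * H 0 with hκdef
    clear_value ε κ
    have h2 : κ * (t - 0) + 1 ≤ Real.exp (κ * (t - 0)) := Real.add_one_le_exp _
    have h3 : (ε / κ) * (κ * (t - 0) + 1) ≤ (ε / κ) * Real.exp (κ * (t - 0)) :=
      mul_le_mul_of_nonneg_left h2 (by positivity)
    have h4 : (ε / κ) * κ = ε := div_mul_cancel₀ ε (ne_of_gt hκpos)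
    have h5 : (ε / κ) * (κ * (t - 0) + 1) = ε * t + ε / κ := by
      have h6 : (ε / κ) * (κ * (t - 0) + 1) = ((ε / κ) * κ) * t + ε / κ := by ring
      rw [h6, h4]
    have h7 : ε * t + ε / κ ≤ ε / κ * Real.exp (κ * (t - 0)) := h5 ▸ h3
    linarith [h1, h7]
  set X := Real.sqrt (2 * b / c) with hX
  have hXsq : X ^ 2 = 2 * b / c := Real.sq_sqrt (by positivity)
  have hXnn : 0 ≤ X := Real.sqrt_nonneg _
  obtain ⟨t₁, ht₁pos, ht₁⟩ : ∃ t₁ : ℝ, 0 < t₁ ∧ X + 1 ≤ H t₁ := by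
    refine ⟨(X + 1) / (c * (H 0) ^ 2 - b), by positivity, ?_⟩
    have := hlin ((X + 1) / (c * (H 0) ^ 2 - b)) (by positivity : (0:ℝ) ≤ _)
    have h6 : (c * (H 0) ^ 2 - b) * ((X + 1) / (c * (H 0) ^ 2 - b)) = X + 1 :=
      mul_div_cancel₀ _ (ne_of_gt hεpos)
    rw [h6] at this
    linarith
  have ht₁X : X + 1 ≤ H t₁ := ht₁
  have hHt₁pos : 0 < H t₁ := by linarith
  -- stage 2: persistence above H t₁ for t ≥ t₁
  have hε₁pos : 0 < c * (H t₁) ^ 2 - b := by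
    have : X ^ 2 ≤ (H t₁) ^ 2 := by nlinarith
    have : 2 * b / c ≤ (H t₁) ^ 2 := by rw [← hXsq]; exact this
    have h7 : 2 * b ≤ c * (H t₁) ^ 2 := by
      rw [div_le_iff₀ hc] at this; linarith [this]
    linarith
  have hκ₁pos : 0 < 2 * c * H t₁ := by positivity
  have hpersist : ∀ t ∈ Ici t₁, H t₁ ≤ H t := by
    intro t ht
    have hgrow₁ := growth_lemma (f := H) (d := D) (t₀ := t₁)
      (ε := c * (H t₁) ^ 2 - b) hκ₁pos
      (hHcont.mono (Ici_subset_Ici.mpr ht₁pos.le))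
      (fun s hs => hD s (lt_trans ht₁pos hs))
      (fun s hs => by
        have h := hineq s (lt_trans ht₁pos hs)
        nlinarith [sq_nonneg (H s - H t₁), hc.le])
    have h1 := hgrow₁ t ht
    have h2 : (1:ℝ) ≤ Real.exp (2 * c * H t₁ * (t - t₁)) :=
      Real.one_le_exp (mul_nonneg hκ₁pos.le (sub_nonneg.mpr ht))
    have h3 : 0 ≤ (c * (H t₁) ^ 2 - b) / (2 * c * H t₁) := by positivity
    nlinarith [mul_le_mul_of_nonneg_left h2 h3]
  -- now H t ≥ H t₁ ≥ X + 1 for t ≥ t₁, and (c/2) * (H t)^2 ≥ b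
  have hHge : ∀ t ∈ Ici t₁, X + 1 ≤ H t := fun t ht => le_trans ht₁X (hpersist t ht)
  have hHpos : ∀ t ∈ Ici t₁, 0 < H t := fun t ht => by have := hHge t ht; linarith
  have hbd2 : ∀ t ∈ Ici t₁, b ≤ c / 2 * (H t) ^ 2 := by
    intro t ht
    have h1 : X ≤ H t := by have := hHge t ht; linarith
    have h2 : X ^ 2 ≤ (H t) ^ 2 := by nlinarith
    rw [hXsq] at h2
    rw [div_le_iff₀ hc] at h2
    linarith
  -- stage 3: J(t) = (H t)⁻¹ + (c/2) t is antitone on [t₁, ∞)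
  set J : ℝ → ℝ := fun t => (H t)⁻¹ + c / 2 * t with hJ
  have hJd : ∀ t ∈ Ioi t₁, HasDerivAt J (-D t / (H t) ^ 2 + c / 2) t := by
    intro t ht
    have h1 : HasDerivAt (fun t => (H t)⁻¹) (-D t / (H t) ^ 2) t :=
      (hD t (lt_trans ht₁pos ht)).inv (ne_of_gt (hHpos t (Ioi_subset_Ici_self ht)))
    have h2 : HasDerivAt (fun t : ℝ => c / 2 * t) (c / 2) t := by
      simpa using (hasDerivAt_id t).const_mul (c / 2)
    exact h1.add h2
  have hJanti : AntitoneOn J (Ici t₁) := by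
    apply antitoneOn_of_deriv_nonpos (convex_Ici t₁)
    · apply ContinuousOn.add
      · exact ContinuousOn.inv₀ (hHcont.mono (Ici_subset_Ici.mpr ht₁pos.le))
          (fun t ht => ne_of_gt (hHpos t ht))
      · fun_prop
    · intro t ht
      rw [interior_Ici] at ht
      exact (hJd t ht).differentiableAt.differentiableWithinAt
    · intro t ht
      rw [interior_Ici] at ht
      rw [(hJd t ht).deriv]
      have h1 : b ≤ c / 2 * (H t) ^ 2 := hbd2 t (Ioi_subset_Ici_self ht)
      have h2 : c * (H t) ^ 2 - b ≤ D t := hineq t (lt_trans ht₁pos ht)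
      have h3 : 0 < (H t) ^ 2 := pow_pos (hHpos t (Ioi_subset_Ici_self ht)) 2
      have h4 : c / 2 ≤ D t / (H t) ^ 2 := by
        rw [le_div_iff₀ h3]; linarith
      have h5 : -D t / (H t) ^ 2 = -(D t / (H t) ^ 2) := by ring
      rw [h5]; linarith
  -- conclude
  set t₂ := t₁ + 2 / c * (H t₁)⁻¹ + 1 with ht₂
  have hip : 0 < (H t₁)⁻¹ := inv_pos.mpr hHt₁pos
  have hprod : 0 < 2 / c * (H t₁)⁻¹ + 1 := by
    have h := mul_pos (div_pos two_pos hc) hip; linarith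
  have ht₂mem : t₂ ∈ Ici t₁ := by
    simp only [ht₂, mem_Ici]; linarith
  have hJle := hJanti self_mem_Ici ht₂mem (by simp only [ht₂, mem_Ici]; linarith)
  have hinv2pos : 0 < (H t₂)⁻¹ := inv_pos.mpr (hHpos t₂ ht₂mem)
  have hkey : c / 2 * (t₂ - t₁) = (H t₁)⁻¹ + c / 2 := by
    have h1 : t₂ - t₁ = 2 / c * (H t₁)⁻¹ + 1 := by simp [ht₂]; ring
    rw [h1]
    field_simp
  simp only [hJ] at hJle
  nlinarith [hJle, hkey, hinv2pos, hc]

end BlowupAux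
open Set MeasureTheory Filter Topology intervalIntegral

/-- The constant `α(N)`: `α(1) = 1`, `α(2) = 2π`, and
`α(N) = N(N−2)·π^{N/2}/Γ(N/2+1)` for `N ≥ 3`. -/
noncomputable def alphaConst (N : ℕ) : ℝ :=
  if N = 1 then 1
  else if N = 2 then 2 * Real.pi
  else (N : ℝ) * ((N : ℝ) - 2) * Real.pi ^ ((N : ℝ) / 2) / Real.Gamma ((N : ℝ) / 2 + 1)

set_option maxHeartbeats 1000000 in
/-- Blowup for the `C¹` solutions of the `N`-dimensional Euler–Poisson equations with
attractive forces (`δ = −1`) and pressure (`K > 0`, `γ > 1`), in radial symmetry: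
under the stated initial condition on `H₀ = ∫₀^R rⁿ V₀ dr`, no global-in-time solution
with compact support in `[0,R]` exists. -/
theorem blowup_eulerPoisson_attractive_with_pressure
    (N : ℕ) (hN : 1 ≤ N) (n R K γ M : ℝ)
    (hn : max ((N : ℝ) - 2) 0 < n) (hR : 0 < R) (hK : 0 < K) (hγ : 1 < γ) (hM : 0 < M)
    (ρ V : ℝ → ℝ → ℝ)
    (hρC1 : ContDiffOn ℝ 1 (Function.uncurry ρ) (Set.Ici 0 ×ˢ Set.Ici 0))
    (hVC1 : ContDiffOn ℝ 1 (Function.uncurry V) (Set.Ici 0 ×ˢ Set.Ici 0))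
    (hρnn : ∀ t r, 0 ≤ ρ t r)
    (hsupp : ∀ t r, R ≤ r → ρ t r = 0 ∧ V t r = 0)
    (hmass : ∀ t, 0 ≤ t →
      alphaConst N * (∫ s in (0:ℝ)..R, ρ t s * s ^ (N - 1)) = M)
    (hdiffp : ∀ t, 0 ≤ t → ∀ r ∈ Set.Ioo (0:ℝ) R,
      DifferentiableAt ℝ (fun s => ρ t s ^ (γ - 1)) r)
    (hmom : ∀ t, 0 ≤ t → ∀ r ∈ Set.Ioo (0:ℝ) R,
      deriv (fun τ => V τ r) t + V t r * deriv (fun s => V t s) r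
        + (K * γ / (γ - 1)) * deriv (fun s => ρ t s ^ (γ - 1)) r
      = -(alphaConst N * r ^ ((1:ℝ) - N) * ∫ s in (0:ℝ)..r, ρ t s * s ^ (N - 1)))
    (hH0 : Real.sqrt (2 * R ^ (2 * n - N + 4) * M / (n * (n + 1) * (n - N + 2)))
        < ∫ r in (0:ℝ)..R, r ^ n * V 0 r) :
    False := by
  have hVC1' : ContDiffOn ℝ 1 (Function.uncurry V) BlowupAux.Q := hVC1
  have hρC1' : ContDiffOn ℝ 1 (Function.uncurry ρ) BlowupAux.Q := hρC1
  -- basic positivity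
  have hn0 : 0 < n := lt_of_le_of_lt (le_max_right _ _) hn
  have hnN : (N : ℝ) - 2 < n := lt_of_le_of_lt (le_max_left _ _) hn
  have hnN2 : 0 < n - N + 2 := by linarith
  have hγ1 : 0 < γ - 1 := by linarith
  have hα : 0 < alphaConst N := by
    unfold alphaConst
    split_ifs with h1 h2
    · norm_num
    · positivity
    · have hN3 : 3 ≤ N := by omega
      have hN3' : (3:ℝ) ≤ (N:ℝ) := by exact_mod_cast hN3
      have h1 : (0:ℝ) < (N:ℝ) := by linarith
      have h2 : (0:ℝ) < (N:ℝ) - 2 := by linarith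
      have h3 : (0:ℝ) < Real.pi ^ ((N:ℝ) / 2) := Real.rpow_pos_of_pos Real.pi_pos _
      have h4 : (0:ℝ) < Real.Gamma ((N:ℝ) / 2 + 1) := Real.Gamma_pos_of_pos (by positivity)
      positivity
  -- main objects
  set Vt : ℝ × ℝ → ℝ := BlowupAux.pt V with hVt_def
  set Vr : ℝ × ℝ → ℝ := BlowupAux.pr V with hVr_def
  set H : ℝ → ℝ := fun t => ∫ r in (0:ℝ)..R, r ^ n * V t r with hH_def
  set D : ℝ → ℝ := fun t => ∫ r in (0:ℝ)..R, r ^ n * Vt (t, r) with hD_def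
  set I2 : ℝ → ℝ := fun t => ∫ r in (0:ℝ)..R, r ^ (n - 1) * (V t r) ^ 2 with hI2_def
  set A : ℝ := R ^ (n + 2) / (n + 2) with hA_def
  set b : ℝ := M * R ^ (n - N + 2) / (n - N + 2) with hb_def
  set c : ℝ := n / (2 * A) with hc_def
  have hA_pos : 0 < A := by
    rw [hA_def]
    have := Real.rpow_pos_of_pos hR (n + 2)
    positivity
  have hb_pos : 0 < b := by
    rw [hb_def]
    have := Real.rpow_pos_of_pos hR (n - N + 2)
    positivity
  have hc_pos : 0 < c := by rw [hc_def]; positivity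
  -- continuity helpers
  have hVcont : ∀ t : ℝ, 0 ≤ t → ContinuousOn (fun r => V t r) (Ici 0) :=
    fun t ht => BlowupAux.contOn_slice_r hVC1' ht
  have hρcont : ∀ t : ℝ, 0 ≤ t → ContinuousOn (fun r => ρ t r) (Ici 0) :=
    fun t ht => BlowupAux.contOn_slice_r hρC1' ht
  have hVtcont : ContinuousOn Vt BlowupAux.Q := BlowupAux.contOn_pt hVC1'
  have hrpow_cont : ∀ y : ℝ, 0 ≤ y → Continuous fun x : ℝ => x ^ y := fun y hy =>
    continuous_iff_continuousAt.mpr fun x => Real.continuousAt_rpow_const x y (Or.inr hy)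
  have hVt_slice : ∀ t : ℝ, 0 ≤ t → ContinuousOn (fun r => Vt (t, r)) (Ici 0) := by
    intro t ht
    exact hVtcont.comp (Continuous.continuousOn (by fun_prop))
      (fun r (hr : r ∈ Ici (0:ℝ)) => BlowupAux.mem_Q ht hr)
  -- S1 : differentiability of H
  have hS1 : ∀ t ∈ Ioi (0:ℝ), HasDerivAt H (D t) t := by
    intro t ht
    have htpos : (0:ℝ) < t := ht
    have hKcomp : IsCompact (Icc (t/2) (3*t/2) ×ˢ Icc (0:ℝ) R) :=
      isCompact_Icc.prod isCompact_Icc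
    have hsubQ : (Icc (t/2) (3*t/2) ×ˢ Icc (0:ℝ) R) ⊆ BlowupAux.Q := by
      rintro ⟨x, y⟩ ⟨hx, hy⟩
      exact BlowupAux.mem_Q (le_trans (by linarith) hx.1) hy.1
    obtain ⟨C, hC⟩ := hKcomp.exists_bound_of_continuousOn (hVtcont.mono hsubQ)
    have hCnn : 0 ≤ C := le_trans (norm_nonneg _)
      (hC (t, 0) ⟨⟨by linarith, by linarith⟩, ⟨le_rfl, hR.le⟩⟩)
    have hεpos : (0:ℝ) < t/2 := by linarith
    have hball : ∀ x ∈ Metric.ball t (t/2), (0:ℝ) < x := by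
      intro x hx
      rw [Metric.mem_ball, Real.dist_eq] at hx
      have h := abs_lt.mp hx
      linarith [h.1]
    have hballIcc : Metric.ball t (t/2) ⊆ Icc (t/2) (3*t/2) := by
      intro x hx
      rw [Metric.mem_ball, Real.dist_eq] at hx
      have h := abs_lt.mp hx
      exact ⟨by linarith [h.1], by linarith [h.2]⟩
    have h1 : ∀ᶠ x in 𝓝 t, AEStronglyMeasurable (fun r => r ^ n * V x r)
        (MeasureTheory.volume.restrict (uIoc (0:ℝ) R)) := by
      filter_upwards [Metric.ball_mem_nhds t hεpos] with x hx
      apply ContinuousOn.aestronglyMeasurable _ measurableSet_uIoc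
      rw [uIoc_of_le hR.le]
      exact ((hrpow_cont n hn0.le).continuousOn.mul
        ((hVcont x (hball x hx).le).mono (fun r hr => le_of_lt hr.1)))
    have h2 : IntervalIntegrable (fun r => r ^ n * V t r) MeasureTheory.volume 0 R := by
      apply ContinuousOn.intervalIntegrable
      rw [uIcc_of_le hR.le]
      exact (hrpow_cont n hn0.le).continuousOn.mul
        ((hVcont t htpos.le).mono Icc_subset_Ici_self)
    have h3 : AEStronglyMeasurable (fun r => r ^ n * Vt (t, r))
        (MeasureTheory.volume.restrict (uIoc (0:ℝ) R)) := by
      apply ContinuousOn.aestronglyMeasurable _ measurableSet_uIoc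
      rw [uIoc_of_le hR.le]
      exact (hrpow_cont n hn0.le).continuousOn.mul
        ((hVt_slice t htpos.le).mono (fun r hr => le_of_lt hr.1))
    have h4 : ∀ᵐ r ∂(MeasureTheory.volume), r ∈ uIoc (0:ℝ) R →
        ∀ x ∈ Metric.ball t (t/2), ‖r ^ n * Vt (x, r)‖ ≤ R ^ n * C := by
      apply Filter.Eventually.of_forall
      intro r hr x hx
      rw [uIoc_of_le hR.le] at hr
      rw [norm_mul]
      have e1 : ‖r ^ n‖ ≤ R ^ n := by
        rw [Real.norm_eq_abs, abs_of_nonneg (Real.rpow_nonneg hr.1.le _)]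
        exact Real.rpow_le_rpow hr.1.le hr.2 hn0.le
      have e2 : ‖Vt (x, r)‖ ≤ C := hC (x, r) ⟨hballIcc hx, ⟨hr.1.le, hr.2⟩⟩
      exact mul_le_mul e1 e2 (norm_nonneg _) (Real.rpow_nonneg hR.le _)
    have h5 : IntervalIntegrable (fun _ : ℝ => R ^ n * C) MeasureTheory.volume 0 R :=
      intervalIntegrable_const
    have h6 : ∀ᵐ r ∂(MeasureTheory.volume), r ∈ uIoc (0:ℝ) R →
        ∀ x ∈ Metric.ball t (t/2),
          HasDerivAt (fun τ => τ ^ 0 * 0 + r ^ n * V τ r) (r ^ n * Vt (x, r)) x := by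
      apply Filter.Eventually.of_forall
      intro r hr x hx
      rw [uIoc_of_le hR.le] at hr
      have := HasDerivAt.const_mul (r ^ n)
        (BlowupAux.hasDerivAt_fst hVC1' (hball x hx) hr.1.le)
      simpa using this
    have h6' : ∀ᵐ r ∂(MeasureTheory.volume), r ∈ uIoc (0:ℝ) R →
        ∀ x ∈ Metric.ball t (t/2),
          HasDerivAt (fun τ => r ^ n * V τ r) (r ^ n * Vt (x, r)) x := by
      filter_upwards [h6] with r hr
      intro hmem x hx
      simpa using hr hmem x hx
    have hmain := intervalIntegral.hasDerivAt_integral_of_dominated_loc_of_deriv_le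
      (F := fun τ r => r ^ n * V τ r) (F' := fun τ r => r ^ n * Vt (τ, r))
      (bound := fun _ : ℝ => R ^ n * C) (Metric.ball_mem_nhds t hεpos) h1 h2 h3 h4 h5 h6'
    exact hmain.2
  -- S2 : continuity of H on [0, ∞)
  have hS2 : ContinuousOn H (Ici 0) := by
    intro t ht
    rcases eq_or_lt_of_le (mem_Ici.mp ht) with h0 | h0
    · rw [← h0]
      have hKcomp : IsCompact (Icc (0:ℝ) 1 ×ˢ Icc (0:ℝ) R) := isCompact_Icc.prod isCompact_Icc
      have hsubQ : (Icc (0:ℝ) 1 ×ˢ Icc (0:ℝ) R) ⊆ BlowupAux.Q := by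
        rintro ⟨x, y⟩ ⟨hx, hy⟩
        exact BlowupAux.mem_Q hx.1 hy.1
      obtain ⟨C0, hC0⟩ := hKcomp.exists_bound_of_continuousOn (hVC1'.continuousOn.mono hsubQ)
      apply intervalIntegral.continuousWithinAt_of_dominated_interval
        (bound := fun _ : ℝ => R ^ n * C0)
      · filter_upwards [self_mem_nhdsWithin] with x hx
        apply ContinuousOn.aestronglyMeasurable _ measurableSet_uIoc
        rw [uIoc_of_le hR.le]
        exact (hrpow_cont n hn0.le).continuousOn.mul
          ((hVcont x hx).mono (fun r hr => le_of_lt hr.1))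
      · have hev : ∀ᶠ x in 𝓝[Ici (0:ℝ)] (0:ℝ), x ∈ Icc (0:ℝ) 1 := by
          filter_upwards [self_mem_nhdsWithin,
            mem_nhdsWithin_of_mem_nhds (Metric.ball_mem_nhds (0:ℝ) one_pos)] with x hx1 hx2
          rw [Metric.mem_ball, Real.dist_eq, sub_zero] at hx2
          exact ⟨hx1, le_of_lt (abs_lt.mp hx2).2⟩
        filter_upwards [hev] with x hx
        apply Filter.Eventually.of_forall
        intro r hr
        rw [uIoc_of_le hR.le] at hr
        rw [norm_mul]
        have e1 : ‖r ^ n‖ ≤ R ^ n := by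
          rw [Real.norm_eq_abs, abs_of_nonneg (Real.rpow_nonneg hr.1.le _)]
          exact Real.rpow_le_rpow hr.1.le hr.2 hn0.le
        have e2 : ‖V x r‖ ≤ C0 := hC0 (x, r) ⟨hx, ⟨hr.1.le, hr.2⟩⟩
        exact mul_le_mul e1 e2 (norm_nonneg _) (Real.rpow_nonneg hR.le _)
      · exact intervalIntegrable_const
      · apply Filter.Eventually.of_forall
        intro r hr
        rw [uIoc_of_le hR.le] at hr
        exact continuousWithinAt_const.mul
          ((BlowupAux.contOn_slice_t hVC1' hr.1.le) 0 self_mem_Ici)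
    · exact (hS1 t h0).continuousAt.continuousWithinAt
  -- integrability of the I2 integrand
  have hI2int : ∀ t : ℝ, 0 ≤ t →
      IntervalIntegrable (fun r => r ^ (n - 1) * (V t r) ^ 2) MeasureTheory.volume 0 R := by
    intro t ht
    obtain ⟨Cv, hCv⟩ : ∃ Cv, ∀ r ∈ Icc (0:ℝ) R, ‖V t r‖ ≤ Cv :=
      isCompact_Icc.exists_bound_of_continuousOn ((hVcont t ht).mono Icc_subset_Ici_self)
    rw [intervalIntegrable_iff_integrableOn_Ioc_of_le hR.le]
    have hbint : IntegrableOn (fun r : ℝ => r ^ (n - 1) * Cv ^ 2) (Ioc 0 R) := by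
      have h1 : IntervalIntegrable (fun r : ℝ => r ^ (n - 1)) MeasureTheory.volume 0 R :=
        intervalIntegrable_rpow' (by linarith)
      have h2 := h1.mul_const (Cv ^ 2)
      rw [intervalIntegrable_iff_integrableOn_Ioc_of_le hR.le] at h2
      exact h2
    apply MeasureTheory.Integrable.mono' hbint
    · apply ContinuousOn.aestronglyMeasurable _ measurableSet_Ioc
      apply ContinuousOn.mul
      · intro r hr
        exact (Real.continuousAt_rpow_const r (n-1) (Or.inl (ne_of_gt hr.1))).continuousWithinAt
      · exact (((hVcont t ht).mono (fun r (hr : r ∈ Ioc (0:ℝ) R) => le_of_lt hr.1)).pow 2)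
    · rw [ae_restrict_iff' measurableSet_Ioc]
      apply Filter.Eventually.of_forall
      intro r hr
      have h1 : 0 ≤ r ^ (n - 1) := Real.rpow_nonneg hr.1.le _
      have h2 : ‖V t r‖ ≤ Cv := hCv r ⟨hr.1.le, hr.2⟩
      have h3 : (V t r) ^ 2 ≤ Cv ^ 2 := by
        have := abs_nonneg (V t r)
        rw [Real.norm_eq_abs] at h2
        nlinarith [sq_abs (V t r)]
      rw [Real.norm_eq_abs, abs_mul, abs_of_nonneg h1, abs_of_nonneg (sq_nonneg (V t r))]
      exact mul_le_mul_of_nonneg_left h3 h1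
  -- S3 : the key differential inequality
  have hS3 : ∀ t ∈ Ioi (0:ℝ), n / 2 * I2 t - b ≤ D t := by
    intro t ht
    have htpos : (0:ℝ) < t := ht
    have htnn : (0:ℝ) ≤ t := htpos.le
    have hcp_pos : 0 < K * γ / (γ - 1) := by
      apply div_pos (by positivity) hγ1
    set cp : ℝ := K * γ / (γ - 1) with hcp
    set W : ℝ → ℝ := fun r => r ^ n * ((V t r) ^ 2 / 2 + cp * ρ t r ^ (γ - 1)) with hWdef
    set G : ℝ → ℝ := fun r =>
      alphaConst N * r ^ ((1:ℝ) - N) * ∫ s in (0:ℝ)..r, ρ t s * s ^ (N - 1) with hGdef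
    set E : ℝ → ℝ := fun r =>
      n * r ^ (n - 1) * ((V t r) ^ 2 / 2 + cp * ρ t r ^ (γ - 1))
        - r ^ n * G r - r ^ n * Vt (t, r) with hEdef
    -- continuity facts
    have hvc : ContinuousOn (fun r => V t r) (Ici 0) := hVcont t htnn
    have hρc : ContinuousOn (fun r => ρ t r) (Ici 0) := hρcont t htnn
    have hpc : ContinuousOn (fun r => ρ t r ^ (γ - 1)) (Ici 0) :=
      (hrpow_cont (γ - 1) hγ1.le).comp_continuousOn hρc
    have hVtc : ContinuousOn (fun r => Vt (t, r)) (Ici 0) := hVt_slice t htnn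
    have hρsint : IntegrableOn (fun s => ρ t s * s ^ (N - 1)) (Icc 0 R) MeasureTheory.volume :=
      ((hρc.mono Icc_subset_Ici_self).mul (continuous_pow (N - 1)).continuousOn).integrableOn_Icc
    have hmc : ContinuousOn (fun x => ∫ s in (0:ℝ)..x, ρ t s * s ^ (N - 1)) (Icc 0 R) := by
      have h := intervalIntegral.continuousOn_primitive_interval
        (a := (0:ℝ)) (b := R) (μ := MeasureTheory.volume) (f := fun s => ρ t s * s ^ (N - 1))
        (by rwa [uIcc_of_le hR.le])
      rwa [uIcc_of_le hR.le] at h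
    have hρs_nonneg : ∀ s ∈ Ioc (0:ℝ) R, 0 ≤ ρ t s * s ^ (N - 1) := fun s hs =>
      mul_nonneg (hρnn t s) (pow_nonneg hs.1.le _)
    have hmint : IntervalIntegrable (fun s => ρ t s * s ^ (N - 1)) MeasureTheory.volume 0 R := by
      apply ContinuousOn.intervalIntegrable
      rw [uIcc_of_le hR.le]
      exact (hρc.mono Icc_subset_Ici_self).mul (continuous_pow (N - 1)).continuousOn
    have hm_le : ∀ r ∈ Ioc (0:ℝ) R,
        alphaConst N * (∫ s in (0:ℝ)..r, ρ t s * s ^ (N - 1)) ≤ M := by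
      intro r hr
      rw [← hmass t htnn]
      apply mul_le_mul_of_nonneg_left _ hα.le
      apply integral_mono_interval le_rfl hr.1.le hr.2 _ hmint
      filter_upwards [MeasureTheory.ae_restrict_mem measurableSet_Ioc] with s hs
      exact hρs_nonneg s hs
    have hm_nonneg : ∀ r ∈ Ioc (0:ℝ) R, 0 ≤ ∫ s in (0:ℝ)..r, ρ t s * s ^ (N - 1) := by
      intro r hr
      apply integral_nonneg hr.1.le
      intro s hs
      exact mul_nonneg (hρnn t s) (pow_nonneg hs.1 _)
    -- continuity of the pieces of E on (0, R]
    have hIoc_Ici : Ioc (0:ℝ) R ⊆ Ici 0 := fun r hr => hr.1.le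
    have hIoc_Icc : Ioc (0:ℝ) R ⊆ Icc 0 R := Ioc_subset_Icc_self
    have hrpow_IocC : ∀ y : ℝ, ContinuousOn (fun r : ℝ => r ^ y) (Ioc 0 R) := by
      intro y r hr
      exact (Real.continuousAt_rpow_const r y (Or.inl hr.1.ne')).continuousWithinAt
    have hf1c : ContinuousOn
        (fun r => n * r ^ (n - 1) * ((V t r) ^ 2 / 2 + cp * ρ t r ^ (γ - 1))) (Ioc 0 R) := by
      apply ContinuousOn.mul (continuousOn_const.mul (hrpow_IocC (n - 1)))
      exact (((hvc.mono hIoc_Ici).pow 2).div_const 2).add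
        (continuousOn_const.mul (hpc.mono hIoc_Ici))
    have hGc : ContinuousOn G (Ioc 0 R) := by
      rw [hGdef]
      exact (continuousOn_const.mul (hrpow_IocC ((1:ℝ) - N))).mul (hmc.mono hIoc_Icc)
    have hf3cIcc : ContinuousOn (fun r => r ^ n * Vt (t, r)) (Icc 0 R) :=
      (hrpow_cont n hn0.le).continuousOn.mul (hVtc.mono Icc_subset_Ici_self)
    have hEc : ContinuousOn E (Ioc 0 R) := by
      rw [hEdef]
      exact ((hf1c.sub ((hrpow_IocC n).mul hGc)).sub (hf3cIcc.mono hIoc_Icc))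
    have hi2c : ContinuousOn (fun r => r ^ (n - 1) * (V t r) ^ 2) (Ioc 0 R) :=
      (hrpow_IocC (n - 1)).mul ((hvc.mono hIoc_Ici).pow 2)
    -- derivative of W
    have hWd : ∀ r ∈ Ioo (0:ℝ) R, HasDerivAt W (E r) r := by
      intro r hr
      have hr0 : 0 < r := hr.1
      have h1 : HasDerivAt (fun x : ℝ => x ^ n) (n * r ^ (n - 1)) r :=
        Real.hasDerivAt_rpow_const (Or.inl hr0.ne')
      have h2 : HasDerivAt (fun x => V t x) (Vr (t, r)) r :=
        BlowupAux.hasDerivAt_snd hVC1' htnn hr0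
      have h3 : HasDerivAt (fun x => ρ t x ^ (γ - 1))
          (deriv (fun x => ρ t x ^ (γ - 1)) r) r := (hdiffp t htnn r hr).hasDerivAt
      have h5 : HasDerivAt (fun x => (V t x) ^ 2) (2 * V t r * Vr (t, r)) r := by
        have h5' := h2.pow 2
        norm_num at h5'
        exact h5'
      have h4 : HasDerivAt (fun x => (V t x) ^ 2 / 2 + cp * ρ t x ^ (γ - 1))
          (V t r * Vr (t, r) + cp * deriv (fun x => ρ t x ^ (γ - 1)) r) r := by
        have := (h5.div_const 2).add (h3.const_mul cp)
        exact this.congr_deriv (by ring)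
      have hprod := h1.mul h4
      have hmom' := hmom t htnn r hr
      rw [(BlowupAux.hasDerivAt_fst hVC1' htpos hr0.le).deriv,
          (BlowupAux.hasDerivAt_snd hVC1' htnn hr0).deriv] at hmom'
      rw [← hVt_def, ← hVr_def] at hmom'
      refine hprod.congr_deriv ?_
      symm
      rw [hEdef, hGdef]
      simp only []
      linear_combination (-(r ^ n)) * hmom'
    -- the truncated inequality
    have hkey : ∀ a ∈ Ioo (0:ℝ) (R/2),
        n / 2 * (∫ r in a..(R - a), r ^ (n - 1) * (V t r) ^ 2) - b - W (R - a) + W a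
          ≤ ∫ r in a..(R - a), r ^ n * Vt (t, r) := by
      intro a ha
      have ha0 : 0 < a := ha.1
      have hab : a ≤ R - a := by linarith [ha.2]
      have hbR : R - a < R := by linarith
      have hsubIoc : Icc a (R - a) ⊆ Ioc 0 R :=
        fun r hr => ⟨lt_of_lt_of_le ha0 hr.1, le_trans hr.2 hbR.le⟩
      have hsubIoo : Icc a (R - a) ⊆ Ioo 0 R :=
        fun r hr => ⟨lt_of_lt_of_le ha0 hr.1, lt_of_le_of_lt hr.2 hbR⟩
      have hEint : IntervalIntegrable E MeasureTheory.volume a (R - a) := by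
        apply ContinuousOn.intervalIntegrable
        rw [uIcc_of_le hab]
        exact hEc.mono hsubIoc
      have hFTC : ∫ r in a..(R - a), E r = W (R - a) - W a := by
        apply intervalIntegral.integral_eq_sub_of_hasDerivAt _ hEint
        intro r hr
        rw [uIcc_of_le hab] at hr
        exact hWd r (hsubIoo hr)
      have hint1 : IntervalIntegrable
          (fun r => n * r ^ (n - 1) * ((V t r) ^ 2 / 2 + cp * ρ t r ^ (γ - 1)))
          MeasureTheory.volume a (R - a) := by
        apply ContinuousOn.intervalIntegrable
        rw [uIcc_of_le hab]; exact hf1c.mono hsubIoc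
      have hint2 : IntervalIntegrable (fun r => r ^ n * G r)
          MeasureTheory.volume a (R - a) := by
        apply ContinuousOn.intervalIntegrable
        rw [uIcc_of_le hab]; exact ((hrpow_IocC n).mul hGc).mono hsubIoc
      have hint3 : IntervalIntegrable (fun r => r ^ n * Vt (t, r))
          MeasureTheory.volume a (R - a) := by
        apply ContinuousOn.intervalIntegrable
        rw [uIcc_of_le hab]; exact (hf3cIcc.mono hIoc_Icc).mono hsubIoc
      have hint4 : IntervalIntegrable (fun r => n / 2 * (r ^ (n - 1) * (V t r) ^ 2))
          MeasureTheory.volume a (R - a) := by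
        apply ContinuousOn.intervalIntegrable
        rw [uIcc_of_le hab]; exact continuousOn_const.mul (hi2c.mono hsubIoc)
      have hsplit : (∫ r in a..(R - a), E r)
          = (∫ r in a..(R - a), n * r ^ (n - 1) * ((V t r) ^ 2 / 2 + cp * ρ t r ^ (γ - 1)))
            - (∫ r in a..(R - a), r ^ n * G r)
            - ∫ r in a..(R - a), r ^ n * Vt (t, r) := by
        calc (∫ r in a..(R - a), E r)
            = ∫ r in a..(R - a),
              (n * r ^ (n - 1) * ((V t r) ^ 2 / 2 + cp * ρ t r ^ (γ - 1))
                - r ^ n * G r - r ^ n * Vt (t, r)) := by simp only [hEdef]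
          _ = _ := by
              rw [intervalIntegral.integral_sub (hint1.sub hint2) hint3,
                intervalIntegral.integral_sub hint1 hint2]
      have hIa : n / 2 * (∫ r in a..(R - a), r ^ (n - 1) * (V t r) ^ 2)
          ≤ ∫ r in a..(R - a), n * r ^ (n - 1) * ((V t r) ^ 2 / 2 + cp * ρ t r ^ (γ - 1)) := by
        rw [← intervalIntegral.integral_const_mul]
        apply integral_mono_on hab hint4 hint1
        intro r hr
        have hr' := hsubIoc hr
        have h1 : 0 ≤ r ^ (n - 1) := Real.rpow_nonneg hr'.1.le _
        have h2 : 0 ≤ ρ t r ^ (γ - 1) := Real.rpow_nonneg (hρnn t r) _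
        nlinarith [mul_nonneg (mul_nonneg hn0.le h1) (mul_nonneg hcp_pos.le h2)]
      have hIb : (∫ r in a..(R - a), r ^ n * G r) ≤ b := by
        have hpt : ∀ r ∈ Icc a (R - a), r ^ n * G r ≤ M * r ^ (n - N + 1) := by
          intro r hr
          have hr' := hsubIoc hr
          have hr0 : 0 < r := hr'.1
          have e2 : r ^ n * r ^ ((1:ℝ) - N) = r ^ (n - N + 1) := by
            rw [← Real.rpow_add hr0, show n + ((1:ℝ) - N) = n - N + 1 from by ring]
          have e1 : r ^ n * G r
              = (alphaConst N * (∫ s in (0:ℝ)..r, ρ t s * s ^ (N - 1))) * r ^ (n - N + 1) := by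
            rw [hGdef]
            calc r ^ n * (alphaConst N * r ^ ((1:ℝ) - N) * ∫ s in (0:ℝ)..r, ρ t s * s ^ (N - 1))
                = (alphaConst N * ∫ s in (0:ℝ)..r, ρ t s * s ^ (N - 1))
                    * (r ^ n * r ^ ((1:ℝ) - N)) := by ring
              _ = _ := by rw [e2]
          rw [e1]
          exact mul_le_mul_of_nonneg_right (hm_le r hr') (Real.rpow_nonneg hr0.le _)
        have hint5 : IntervalIntegrable (fun r : ℝ => M * r ^ (n - N + 1))
            MeasureTheory.volume a (R - a) :=
          (intervalIntegrable_rpow' (by linarith : (-1:ℝ) < n - N + 1)).const_mul M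
        calc (∫ r in a..(R - a), r ^ n * G r)
            ≤ ∫ r in a..(R - a), M * r ^ (n - N + 1) := integral_mono_on hab hint2 hint5 hpt
          _ ≤ ∫ r in (0:ℝ)..R, M * r ^ (n - N + 1) := by
              apply integral_mono_interval ha0.le hab hbR.le _
                ((intervalIntegrable_rpow' (by linarith : (-1:ℝ) < n - N + 1)).const_mul M)
              filter_upwards [MeasureTheory.ae_restrict_mem measurableSet_Ioc] with s hs
              exact mul_nonneg hM.le (Real.rpow_nonneg hs.1.le _)
          _ = b := by
              rw [intervalIntegral.integral_const_mul,
                integral_rpow (Or.inl (by linarith : (-1:ℝ) < n - N + 1)),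
                show n - (N:ℝ) + 1 + 1 = n - N + 2 from by ring,
                Real.zero_rpow hnN2.ne', hb_def]
              ring
      linarith [hFTC, hsplit, hIa, hIb]
    -- limits a → 0⁺
    have hWc : ContinuousOn W (Ici 0) := by
      rw [hWdef]
      exact (hrpow_cont n hn0.le).continuousOn.mul
        (((hvc.pow 2).div_const 2).add (continuousOn_const.mul hpc))
    have hW0 : W 0 = 0 := by
      rw [hWdef]; simp [Real.zero_rpow hn0.ne']
    have hWR : W R = 0 := by
      rw [hWdef]
      simp [(hsupp t R le_rfl).1, (hsupp t R le_rfl).2, Real.zero_rpow (ne_of_gt hγ1)]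
    have hmemR : R ∈ Icc (0:ℝ) R := right_mem_Icc.mpr hR.le
    have hmem0 : (0:ℝ) ∈ Icc (0:ℝ) R := left_mem_Icc.mpr hR.le
    have htendR : Tendsto (fun a : ℝ => R - a) (𝓝[>] (0:ℝ)) (𝓝[Icc (0:ℝ) R] R) := by
      apply tendsto_nhdsWithin_of_tendsto_nhds_of_eventually_within
      · have h : Tendsto (fun a : ℝ => R - a) (𝓝 (0:ℝ)) (𝓝 (R - 0)) :=
          (continuous_const.sub continuous_id).tendsto 0
        rw [sub_zero] at h
        exact Tendsto.mono_left h nhdsWithin_le_nhds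
      · filter_upwards [Ioo_mem_nhdsGT_of_mem (Set.left_mem_Ico.mpr hR)] with x hx
        exact ⟨by linarith [hx.2], by linarith [hx.1]⟩
    have htend0 : Tendsto (fun a : ℝ => a) (𝓝[>] (0:ℝ)) (𝓝[Icc (0:ℝ) R] 0) := by
      apply tendsto_nhdsWithin_of_tendsto_nhds_of_eventually_within
      · exact tendsto_id.mono_left nhdsWithin_le_nhds
      · filter_upwards [Ioo_mem_nhdsGT_of_mem (Set.left_mem_Ico.mpr hR)] with x hx
        exact ⟨hx.1.le, hx.2.le⟩
    have hW0t : Tendsto (fun a : ℝ => W a) (𝓝[>] (0:ℝ)) (𝓝 (W 0)) :=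
      Tendsto.mono_left (hWc 0 self_mem_Ici) (nhdsWithin_mono 0 (Ioi_subset_Ici le_rfl))
    have hWRt : Tendsto (fun a : ℝ => W (R - a)) (𝓝[>] (0:ℝ)) (𝓝 (W R)) :=
      Tendsto.comp ((hWc.mono Icc_subset_Ici_self) R hmemR) htendR
    have hprim3 : ContinuousOn (fun x => ∫ r in (0:ℝ)..x, r ^ n * Vt (t, r)) (Icc 0 R) := by
      have h := intervalIntegral.continuousOn_primitive_interval (a := (0:ℝ)) (b := R)
        (μ := MeasureTheory.volume) (f := fun r => r ^ n * Vt (t, r))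
        (by rw [uIcc_of_le hR.le]; exact hf3cIcc.integrableOn_Icc)
      rwa [uIcc_of_le hR.le] at h
    have hi2IntIcc : IntegrableOn (fun r => r ^ (n - 1) * (V t r) ^ 2) (Icc 0 R)
        MeasureTheory.volume := by
      rw [integrableOn_Icc_iff_integrableOn_Ioc]
      exact (intervalIntegrable_iff_integrableOn_Ioc_of_le hR.le).mp (hI2int t htnn)
    have hprimI2 : ContinuousOn (fun x => ∫ r in (0:ℝ)..x, r ^ (n - 1) * (V t r) ^ 2)
        (Icc 0 R) := by
      have h := intervalIntegral.continuousOn_primitive_interval (a := (0:ℝ)) (b := R)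
        (μ := MeasureTheory.volume) (f := fun r => r ^ (n - 1) * (V t r) ^ 2)
        (by rw [uIcc_of_le hR.le]; exact hi2IntIcc)
      rwa [uIcc_of_le hR.le] at h
    have hevIoo : Ioo (0:ℝ) (R/2) ∈ 𝓝[>] (0:ℝ) :=
      Ioo_mem_nhdsGT_of_mem (Set.left_mem_Ico.mpr (by linarith))
    have hφ : Tendsto (fun a => ∫ r in a..(R - a), r ^ n * Vt (t, r)) (𝓝[>] (0:ℝ))
        (𝓝 (D t)) := by
      have h1 : Tendsto (fun a : ℝ => (∫ r in (0:ℝ)..(R - a), r ^ n * Vt (t, r))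
            - ∫ r in (0:ℝ)..a, r ^ n * Vt (t, r)) (𝓝[>] (0:ℝ))
          (𝓝 ((∫ r in (0:ℝ)..R, r ^ n * Vt (t, r))
            - ∫ r in (0:ℝ)..(0:ℝ), r ^ n * Vt (t, r))) :=
        Tendsto.sub (Tendsto.comp (hprim3 R hmemR) htendR) (Tendsto.comp (hprim3 0 hmem0) htend0)
      rw [intervalIntegral.integral_same, sub_zero] at h1
      rw [hD_def]
      apply h1.congr'
      filter_upwards [hevIoo] with x hx
      have hx0 : 0 < x := hx.1
      have hi1 : IntervalIntegrable (fun r => r ^ n * Vt (t, r))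
          MeasureTheory.volume 0 (R - x) := by
        apply ContinuousOn.intervalIntegrable
        rw [uIcc_of_le (by linarith [hx.2] : (0:ℝ) ≤ R - x)]
        exact hf3cIcc.mono (Icc_subset_Icc le_rfl (by linarith [hx.1]))
      have hi2' : IntervalIntegrable (fun r => r ^ n * Vt (t, r)) MeasureTheory.volume 0 x := by
        apply ContinuousOn.intervalIntegrable
        rw [uIcc_of_le hx0.le]
        exact hf3cIcc.mono (Icc_subset_Icc le_rfl (by linarith [hx.2]))
      exact intervalIntegral.integral_interval_sub_left hi1 hi2'
    have hψ1 : Tendsto (fun a : ℝ => ∫ r in a..(R - a), r ^ (n - 1) * (V t r) ^ 2)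
        (𝓝[>] (0:ℝ)) (𝓝 (I2 t)) := by
      have h1 : Tendsto (fun a : ℝ => (∫ r in (0:ℝ)..(R - a), r ^ (n - 1) * (V t r) ^ 2)
            - ∫ r in (0:ℝ)..a, r ^ (n - 1) * (V t r) ^ 2) (𝓝[>] (0:ℝ))
          (𝓝 ((∫ r in (0:ℝ)..R, r ^ (n - 1) * (V t r) ^ 2)
            - ∫ r in (0:ℝ)..(0:ℝ), r ^ (n - 1) * (V t r) ^ 2)) :=
        Tendsto.sub (Tendsto.comp (hprimI2 R hmemR) htendR)
          (Tendsto.comp (hprimI2 0 hmem0) htend0)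
      rw [intervalIntegral.integral_same, sub_zero] at h1
      rw [hI2_def]
      apply h1.congr'
      filter_upwards [hevIoo] with x hx
      have hx0 : 0 < x := hx.1
      have hi1 : IntervalIntegrable (fun r => r ^ (n - 1) * (V t r) ^ 2)
          MeasureTheory.volume 0 (R - x) := by
        rw [intervalIntegrable_iff_integrableOn_Ioc_of_le (by linarith [hx.2] : (0:ℝ) ≤ R - x)]
        exact (hi2IntIcc.mono_set (fun r hr => ⟨hr.1.le, by linarith [hr.2, hx.1]⟩))
      have hi2' : IntervalIntegrable (fun r => r ^ (n - 1) * (V t r) ^ 2)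
          MeasureTheory.volume 0 x := by
        rw [intervalIntegrable_iff_integrableOn_Ioc_of_le hx0.le]
        exact (hi2IntIcc.mono_set (fun r hr => ⟨hr.1.le, by linarith [hr.2, hx.2]⟩))
      exact intervalIntegral.integral_interval_sub_left hi1 hi2'
    have hψ : Tendsto (fun a : ℝ => n / 2 * (∫ r in a..(R - a), r ^ (n - 1) * (V t r) ^ 2)
          - b - W (R - a) + W a) (𝓝[>] (0:ℝ)) (𝓝 (n / 2 * I2 t - b)) := by
      have h := (((hψ1.const_mul (n / 2)).sub (tendsto_const_nhds (x := b))).sub hWRt).add hW0t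
      rw [hWR, hW0, sub_zero, add_zero] at h
      exact h
    exact le_of_tendsto_of_tendsto hψ hφ (by
      filter_upwards [hevIoo] with x hx
      exact hkey x hx)
  -- S4 : Cauchy–Schwarz
  have hS4 : ∀ t ∈ Ioi (0:ℝ), (H t) ^ 2 ≤ A * I2 t := by
    intro t ht
    have ht' : (0:ℝ) ≤ t := ht.le
    have hAval : (∫ r in (0:ℝ)..R, r ^ (n + 1)) = A := by
      rw [integral_rpow (Or.inl (by linarith : (-1:ℝ) < n + 1)), hA_def,
        show n + 1 + 1 = n + 2 from by ring,
        Real.zero_rpow (by linarith : n + 2 ≠ 0)]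
      ring
    have hInn : 0 ≤ I2 t := by
      rw [hI2_def]
      apply integral_nonneg hR.le
      intro r hr
      exact mul_nonneg (Real.rpow_nonneg hr.1 _) (sq_nonneg _)
    have hVc : ContinuousOn (fun r => V t r) (Icc 0 R) := (hVcont t ht').mono Icc_subset_Ici_self
    have hint1 : IntervalIntegrable (fun r => |r ^ n * V t r|) MeasureTheory.volume 0 R := by
      apply ContinuousOn.intervalIntegrable
      rw [uIcc_of_le hR.le]
      exact (((hrpow_cont n hn0.le).continuousOn).mul hVc).abs
    have hint3 : IntervalIntegrable (fun r : ℝ => r ^ (n + 1)) MeasureTheory.volume 0 R :=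
      intervalIntegrable_rpow' (by linarith)
    have key : ∀ s : ℝ, 0 < s → |H t| ≤ s / 2 * I2 t + 1 / (2 * s) * A := by
      intro s hs
      have hint2 : IntervalIntegrable
          (fun r => s / 2 * (r ^ (n - 1) * (V t r) ^ 2) + 1 / (2 * s) * r ^ (n + 1))
          MeasureTheory.volume 0 R :=
        ((hI2int t ht').const_mul _).add (hint3.const_mul _)
      have hptwise : ∀ r ∈ Icc (0:ℝ) R,
          |r ^ n * V t r| ≤ s / 2 * (r ^ (n - 1) * (V t r) ^ 2) + 1 / (2 * s) * r ^ (n + 1) := by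
        intro r hr
        rcases eq_or_lt_of_le hr.1 with h0 | h0
        · rw [← h0]
          rw [Real.zero_rpow hn0.ne', zero_mul, abs_zero]
          have e1 : (0:ℝ) ^ (n - 1) = 0 ∨ (0:ℝ) ^ (n-1) = 1 := by
            rcases eq_or_ne (n - 1) 0 with h | h
            · right; rw [h, Real.rpow_zero]
            · left; exact Real.zero_rpow h
          have e2 : (0:ℝ) ^ (n + 1) = 0 := Real.zero_rpow (by linarith)
          rcases e1 with h | h <;> rw [h, e2] <;> positivity
        · set a1 := r ^ ((n - 1) / 2) with ha1
          set b1 := r ^ ((n + 1) / 2) with hb1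
          have ha1nn : 0 ≤ a1 := Real.rpow_nonneg hr.1 _
          have hb1nn : 0 ≤ b1 := Real.rpow_nonneg hr.1 _
          have e1 : a1 * b1 = r ^ n := by
            rw [ha1, hb1, ← Real.rpow_add h0]; ring_nf
          have e2 : a1 * a1 = r ^ (n - 1) := by
            rw [ha1, ← Real.rpow_add h0]; ring_nf
          have e3 : b1 * b1 = r ^ (n + 1) := by
            rw [hb1, ← Real.rpow_add h0]; ring_nf
          rw [← e1, ← e2, ← e3, abs_mul, abs_of_nonneg (mul_nonneg ha1nn hb1nn)]
          clear_value a1 b1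
          have hsq := sq_nonneg (s * a1 * |V t r| - b1)
          have habs : |V t r| * |V t r| = (V t r) ^ 2 := by
            rw [← abs_mul, ← sq, abs_of_nonneg (sq_nonneg _)]
          have h2s : (0:ℝ) < 2 * s := by linarith
          have hmain : 2 * s * (a1 * b1 * |V t r|)
              ≤ s ^ 2 * (a1 * a1) * (V t r) ^ 2 + b1 * b1 := by
            rcases abs_cases (V t r) with ⟨he, _⟩ | ⟨he, _⟩ <;> rw [he]
            · nlinarith [sq_nonneg (s * a1 * V t r - b1)]
            · nlinarith [sq_nonneg (s * a1 * V t r + b1)]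
          calc a1 * b1 * |V t r| = 2 * s * (a1 * b1 * |V t r|) / (2 * s) := by
                field_simp
            _ ≤ (s ^ 2 * (a1 * a1) * (V t r) ^ 2 + b1 * b1) / (2 * s) :=
                (div_le_div_iff_of_pos_right h2s).mpr hmain
            _ = s / 2 * (a1 * a1 * (V t r) ^ 2) + 1 / (2 * s) * (b1 * b1) := by
                field_simp
      calc |H t| ≤ ∫ r in (0:ℝ)..R, |r ^ n * V t r| := by
            rw [hH_def]; exact intervalIntegral.abs_integral_le_integral_abs hR.le
        _ ≤ ∫ r in (0:ℝ)..R,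
            (s / 2 * (r ^ (n - 1) * (V t r) ^ 2) + 1 / (2 * s) * r ^ (n + 1)) :=
            integral_mono_on hR.le hint1 hint2 hptwise
        _ = s / 2 * I2 t + 1 / (2 * s) * A := by
            rw [intervalIntegral.integral_add ((hI2int t ht').const_mul _) (hint3.const_mul _),
              intervalIntegral.integral_const_mul, intervalIntegral.integral_const_mul, hAval, hI2_def]
    rcases eq_or_ne (H t) 0 with hH | hH
    · rw [hH]; norm_num; positivity
    · have hu : 0 < |H t| := abs_pos.mpr hH
      rcases eq_or_lt_of_le hInn with hI | hI
      · exfalso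
        have := key (A / |H t|) (by positivity)
        rw [← hI] at this
        have e1 : 1 / (2 * (A / |H t|)) * A = |H t| / 2 := by
          field_simp; try ring
        rw [e1] at this
        nlinarith
      · have hkey := key (|H t| / I2 t) (by positivity)
        have e1 : |H t| / I2 t / 2 * I2 t = |H t| / 2 := by field_simp; try ring
        have e2 : 1 / (2 * (|H t| / I2 t)) * A = I2 t * A / (2 * |H t|) := by
          field_simp; try ring
        rw [e1, e2] at hkey
        have h3 : |H t| / 2 ≤ I2 t * A / (2 * |H t|) := by linarith
        rw [div_le_div_iff₀ (by norm_num) (by positivity)] at h3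
        nlinarith [sq_abs (H t)]
  -- S5 : Riccati inequality
  have hS5 : ∀ t ∈ Ioi (0:ℝ), c * (H t) ^ 2 - b ≤ D t := by
    intro t ht
    have h1 := hS3 t ht
    have h2 := hS4 t ht
    have h3 : c * (H t) ^ 2 ≤ n / 2 * I2 t := by
      have h4 : c * (H t) ^ 2 ≤ c * (A * I2 t) := mul_le_mul_of_nonneg_left h2 hc_pos.le
      have h5 : c * (A * I2 t) = n / 2 * I2 t := by
        rw [hc_def]; field_simp
      linarith
    linarith
  -- S6 : initial condition
  have hH0pos : 0 < H 0 := lt_of_le_of_lt (Real.sqrt_nonneg _) hH0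
  have hinit : b < c * (H 0) ^ 2 := by
    have hden : 0 < n * (n + 1) * (n - N + 2) := by
      have h1 : 0 < n + 1 := by linarith
      exact mul_pos (mul_pos hn0 h1) hnN2
    have hRp : 0 < R ^ (2 * n - (N:ℝ) + 4) := Real.rpow_pos_of_pos hR _
    have hκpos : 0 < 2 * R ^ (2 * n - (N:ℝ) + 4) * M / (n * (n + 1) * (n - N + 2)) := by
      positivity
    have hsq : 2 * R ^ (2 * n - (N:ℝ) + 4) * M / (n * (n + 1) * (n - N + 2)) < (H 0) ^ 2 := by
      nlinarith [Real.sq_sqrt hκpos.le, Real.sqrt_nonneg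
        (2 * R ^ (2 * n - (N:ℝ) + 4) * M / (n * (n + 1) * (n - N + 2))), hH0]
    have hsplit : R ^ (2 * n - (N:ℝ) + 4) = R ^ (n + 2) * R ^ (n - N + 2) := by
      rw [← Real.rpow_add hR]; ring_nf
    have hP : 0 < R ^ (n + 2) := Real.rpow_pos_of_pos hR _
    have hS : 0 < R ^ (n - (N:ℝ) + 2) := Real.rpow_pos_of_pos hR _
    have hcκ : b < c * (2 * R ^ (2 * n - (N:ℝ) + 4) * M / (n * (n + 1) * (n - N + 2))) := by
      have hne1 : n ≠ 0 := hn0.ne'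
      have hne2 : n + 1 ≠ 0 := by linarith
      have hne3 : n + 2 ≠ 0 := by linarith
      have hne4 : n - (N:ℝ) + 2 ≠ 0 := hnN2.ne'
      have hne5 : R ^ (n + 2) ≠ 0 := hP.ne'
      have hgoal : c * (2 * R ^ (2 * n - (N:ℝ) + 4) * M / (n * (n + 1) * (n - N + 2)))
          = ((n + 2) / (n + 1)) * b := by
        rw [hc_def, hA_def, hb_def, hsplit]
        field_simp
      rw [hgoal]
      have h1 : 1 < (n + 2) / (n + 1) := by
        rw [lt_div_iff₀ (by linarith : (0:ℝ) < n + 1)]; linarith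
      nlinarith [hb_pos]
    calc b < _ := hcκ
      _ ≤ c * (H 0) ^ 2 := mul_le_mul_of_nonneg_left hsq.le hc_pos.le
  exact BlowupAux.ode_blowup hc_pos hb_pos hS2 hS1 hS5 hH0pos hinit
end

section
/- Let N ≥ 1 be an integer, let n > 0 be a real number, let R > 0, K > 0, γ > 1. Let H₀ > 0 and set T := 2R^{n+2}/(n(n+1)H₀). Then there exist no C¹ functions ρ, V : [0,T] × [0,∞) → ℝ such that: (i) ρ(t,r) ≥ 0 for all t, r; (ii) ρ(t,r) = 0 and V(t,r) = 0 whenever r ≥ R (compact support / non-slip boundary condition); (iii) for each t the map r ↦ ρ(t,r)^{γ−1} is differentiable on (0,R), and for all t ∈ [0,T] and 0 < r < R the radial momentum equation with repulsive force holds: ∂ₜV(t,r) + V(t,r)·∂ᵣV(t,r) + (Kγ/(γ−1))·∂ᵣ(ρ(t,r)^{γ−1}) = α(N)·r^{1−N}·∫₀^r ρ(t,s) s^{N−1} ds; (iv) ∫₀^R r^n V(0,r) dr = H₀. In other words, such a solution blows up on or before the finite time T = 2R^{n+2}/(n(n+1)H₀). -/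
open MeasureTheory Set intervalIntegral Filter Topology

set_option maxHeartbeats 1000000

private lemma alphaConst_nonneg (N : ℕ) (hN : 1 ≤ N) : 0 ≤ alphaConst N := by
  unfold alphaConst
  split_ifs with h1 h2
  · norm_num
  · positivity
  · have h3 : 3 ≤ N := by omega
    have h3' : (3:ℝ) ≤ (N:ℝ) := by exact_mod_cast h3
    have hg : 0 < Real.Gamma ((N:ℝ)/2 + 1) := Real.Gamma_pos_of_pos (by positivity)
    apply div_nonneg _ hg.le
    apply mul_nonneg (mul_nonneg (by positivity) (by linarith))
    exact Real.rpow_nonneg Real.pi_pos.le _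

private lemma cs_aux {a b h : ℝ} (ha : 0 < a) (hb : 0 ≤ b)
    (hyp : ∀ l : ℝ, 0 < l → 2 * l * |h| ≤ l ^ 2 * a + b) : h ^ 2 ≤ a * b := by
  rcases eq_or_ne h 0 with rfl | hne
  · simpa using mul_nonneg ha.le hb
  · have hh : 0 < |h| := abs_pos.2 hne
    have key := hyp (|h| / a) (by positivity)
    have ha' : a ≠ 0 := ha.ne'
    have e1 : 2 * (|h| / a) * |h| = 2 * (h ^ 2 / a) := by
      calc 2 * (|h| / a) * |h| = 2 * ((|h| * |h|) / a) := by ring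
        _ = 2 * (h ^ 2 / a) := by rw [abs_mul_abs_self, ← pow_two]
    have e2 : (|h| / a) ^ 2 * a = h ^ 2 / a := by
      rw [div_pow, div_mul_eq_mul_div, sq_abs]
      rw [sq a, ← div_div, mul_div_assoc, div_self ha.ne', mul_one]
    rw [e1, e2] at key
    have key' : h ^ 2 / a ≤ b := by linarith
    have := (div_le_iff₀ ha).1 key'
    linarith [this, mul_comm b a]


/-- Blowup on or before `T = 2R^{n+2}/(n(n+1)H₀)` for the `C¹` solutions of the
`N`-dimensional Euler–Poisson equations with repulsive forces (`δ = 1`) and pressure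
(`K > 0`, `γ > 1`), in radial symmetry, with compact support in `[0,R]` and initial
functional `H₀ = ∫₀^R rⁿ V₀ dr > 0`: no such solution exists on all of `[0,T]`. -/
theorem blowup_eulerPoisson_repulsive_with_pressure
    (N : ℕ) (hN : 1 ≤ N) (n R K γ H₀ T : ℝ)
    (hn : 0 < n) (hR : 0 < R) (hK : 0 < K) (hγ : 1 < γ) (hH₀ : 0 < H₀)
    (hT : T = 2 * R ^ (n + 2) / (n * (n + 1) * H₀))
    (ρ V : ℝ → ℝ → ℝ)
    (hρC1 : ContDiffOn ℝ 1 (Function.uncurry ρ) (Set.Icc 0 T ×ˢ Set.Ici 0))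
    (hVC1 : ContDiffOn ℝ 1 (Function.uncurry V) (Set.Icc 0 T ×ˢ Set.Ici 0))
    (hρnn : ∀ t r, 0 ≤ ρ t r)
    (hsupp : ∀ t r, R ≤ r → ρ t r = 0 ∧ V t r = 0)
    (hdiffp : ∀ t ∈ Set.Icc (0:ℝ) T, ∀ r ∈ Set.Ioo (0:ℝ) R,
      DifferentiableAt ℝ (fun s => ρ t s ^ (γ - 1)) r)
    (hmom : ∀ t ∈ Set.Icc (0:ℝ) T, ∀ r ∈ Set.Ioo (0:ℝ) R,
      deriv (fun τ => V τ r) t + V t r * deriv (fun s => V t s) r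
        + (K * γ / (γ - 1)) * deriv (fun s => ρ t s ^ (γ - 1)) r
      = alphaConst N * r ^ ((1:ℝ) - N) * ∫ s in (0:ℝ)..r, ρ t s * s ^ (N - 1))
    (hH0 : (∫ r in (0:ℝ)..R, r ^ n * V 0 r) = H₀) :
    False := by
  classical
  have hn1 : (0:ℝ) < n + 1 := by linarith
  have hn2 : (0:ℝ) < n + 2 := by linarith
  have hRp : 0 < R ^ (n + 2) := Real.rpow_pos_of_pos hR _
  have hT0 : 0 < T := by rw [hT]; positivity
  set c : ℝ := n * (n + 1) / (2 * R ^ (n + 2)) with hc_def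
  have hc : 0 < c := by positivity
  have hcT : c * T = H₀⁻¹ := by
    rw [hT, hc_def]
    field_simp
  set S : Set (ℝ × ℝ) := Set.Icc 0 T ×ˢ Set.Ici 0 with hS_def
  have hSconv : Convex ℝ S := (convex_Icc _ _).prod (convex_Ici _)
  have hSint : interior S = Set.Ioo 0 T ×ˢ Set.Ioi 0 := by
    rw [hS_def, interior_prod_eq, interior_Icc, interior_Ici]
  have hSud : UniqueDiffOn ℝ S := by
    apply uniqueDiffOn_convex hSconv
    rw [hSint]
    exact (Set.nonempty_Ioo.2 hT0).prod (Set.nonempty_Ioi)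
  -- partial derivatives of V
  set Vt : ℝ → ℝ → ℝ := fun t r => fderivWithin ℝ (Function.uncurry V) S (t, r) (1, 0) with hVt_def
  set Vr : ℝ → ℝ → ℝ := fun t r => fderivWithin ℝ (Function.uncurry V) S (t, r) (0, 1) with hVr_def
  have hVcont : ContinuousOn (Function.uncurry V) S := hVC1.continuousOn
  have hρjcont : ContinuousOn (Function.uncurry ρ) S := hρC1.continuousOn
  have hfdcont : ContinuousOn (fderivWithin ℝ (Function.uncurry V) S) S :=
    hVC1.continuousOn_fderivWithin hSud le_rfl
  have hVtcont : ContinuousOn (fun p : ℝ × ℝ => Vt p.1 p.2) S :=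
    (ContinuousLinearMap.apply ℝ ℝ (((1:ℝ), (0:ℝ)) : ℝ × ℝ)).continuous.comp_continuousOn hfdcont
  have hVrcont : ContinuousOn (fun p : ℝ × ℝ => Vr p.1 p.2) S :=
    (ContinuousLinearMap.apply ℝ ℝ (((0:ℝ), (1:ℝ)) : ℝ × ℝ)).continuous.comp_continuousOn hfdcont
  have hmemS : ∀ {t r : ℝ}, t ∈ Set.Icc (0:ℝ) T → r ∈ Set.Ici (0:ℝ) → (t, r) ∈ S :=
    fun ht hr => Set.mk_mem_prod ht hr
  have hVdiff : DifferentiableOn ℝ (Function.uncurry V) S := hVC1.differentiableOn one_ne_zero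
  have hVtW : ∀ t ∈ Set.Icc (0:ℝ) T, ∀ r ∈ Set.Ici (0:ℝ),
      HasDerivWithinAt (fun τ => V τ r) (Vt t r) (Set.Icc 0 T) t := by
    intro t ht r hr
    have hd := (hVdiff (t, r) (hmemS ht hr)).hasFDerivWithinAt
    have hcurve : HasDerivWithinAt (fun τ : ℝ => ((τ, r) : ℝ × ℝ)) ((1:ℝ), (0:ℝ))
        (Set.Icc 0 T) t := ((hasDerivAt_id' (x := t)).prodMk (hasDerivAt_const t r)).hasDerivWithinAt
    have := hd.comp_hasDerivWithinAt t hcurve (fun τ hτ => hmemS hτ hr)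
    exact this
  have hVrW : ∀ t ∈ Set.Icc (0:ℝ) T, ∀ r ∈ Set.Ici (0:ℝ),
      HasDerivWithinAt (fun s => V t s) (Vr t r) (Set.Ici 0) r := by
    intro t ht r hr
    have hd := (hVdiff (t, r) (hmemS ht hr)).hasFDerivWithinAt
    have hcurve : HasDerivWithinAt (fun s : ℝ => ((t, s) : ℝ × ℝ)) ((0:ℝ), (1:ℝ))
        (Set.Ici 0) r := ((hasDerivAt_const r t).prodMk (hasDerivAt_id' (x := r))).hasDerivWithinAt
    have := hd.comp_hasDerivWithinAt r hcurve (fun s hs => hmemS ht hs)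
    exact this
  have hVtA : ∀ t ∈ Set.Ioo (0:ℝ) T, ∀ r ∈ Set.Ici (0:ℝ),
      HasDerivAt (fun τ => V τ r) (Vt t r) t := fun t ht r hr =>
    (hVtW t (Set.Ioo_subset_Icc_self ht) r hr).hasDerivAt (Icc_mem_nhds ht.1 ht.2)
  have hVrA : ∀ t ∈ Set.Icc (0:ℝ) T, ∀ r ∈ Set.Ioi (0:ℝ),
      HasDerivAt (fun s => V t s) (Vr t r) r := fun t ht r hr =>
    (hVrW t ht r (Set.mem_Ici.mpr (le_of_lt (Set.mem_Ioi.mp hr)))).hasDerivAt (Ici_mem_nhds hr)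
  -- continuity in one variable
  have hslice : ∀ t ∈ Set.Icc (0:ℝ) T, ContinuousOn (fun r : ℝ => ((t, r) : ℝ × ℝ)) (Set.Ici 0) :=
    fun t _ => (continuous_const.prodMk continuous_id).continuousOn
  have hslice' : ∀ r ∈ Set.Ici (0:ℝ), ContinuousOn (fun τ : ℝ => ((τ, r) : ℝ × ℝ)) (Set.Icc 0 T) :=
    fun r _ => (continuous_id.prodMk continuous_const).continuousOn
  have hVcont_r : ∀ r ∈ Set.Ici (0:ℝ), ContinuousOn (fun τ => V τ r) (Set.Icc 0 T) :=
    fun r hr => hVcont.comp (hslice' r hr) (fun τ hτ => hmemS hτ hr)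
  have hVtcont_r : ∀ r ∈ Set.Ici (0:ℝ), ContinuousOn (fun τ => Vt τ r) (Set.Icc 0 T) :=
    fun r hr => hVtcont.comp (hslice' r hr) (fun τ hτ => hmemS hτ hr)
  have hVcont_t : ∀ t ∈ Set.Icc (0:ℝ) T, ContinuousOn (fun r => V t r) (Set.Ici 0) :=
    fun t ht => hVcont.comp (hslice t ht) (fun r hr => hmemS ht hr)
  have hVrcont_t : ∀ t ∈ Set.Icc (0:ℝ) T, ContinuousOn (fun r => Vr t r) (Set.Ici 0) :=
    fun t ht => hVrcont.comp (hslice t ht) (fun r hr => hmemS ht hr)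
  have hVtcont_t : ∀ t ∈ Set.Icc (0:ℝ) T, ContinuousOn (fun r => Vt t r) (Set.Ici 0) :=
    fun t ht => hVtcont.comp (hslice t ht) (fun r hr => hmemS ht hr)
  have hρcont_t : ∀ t ∈ Set.Icc (0:ℝ) T, ContinuousOn (fun r => ρ t r) (Set.Ici 0) :=
    fun t ht => hρjcont.comp (hslice t ht) (fun r hr => hmemS ht hr)
  -- FTC in time for fixed r
  have hFTCt : ∀ t ∈ Set.Icc (0:ℝ) T, ∀ r ∈ Set.Ici (0:ℝ),
      (∫ τ in (0:ℝ)..t, Vt τ r) = V t r - V 0 r := by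
    intro t ht r hr
    apply intervalIntegral.integral_eq_sub_of_hasDeriv_right_of_le ht.1
    · exact (hVcont_r r hr).mono (Set.Icc_subset_Icc le_rfl ht.2)
    · intro x hx
      have hx' : x ∈ Set.Ioo (0:ℝ) T := ⟨hx.1, lt_of_lt_of_le hx.2 ht.2⟩
      exact (hVtA x hx' r hr).hasDerivWithinAt
    · apply ContinuousOn.intervalIntegrable
      rw [Set.uIcc_of_le ht.1]
      exact (hVtcont_r r hr).mono (Set.Icc_subset_Icc le_rfl ht.2)
  -- H and G
  set Hf : ℝ → ℝ := fun t => ∫ r in (0:ℝ)..R, r ^ n * V t r with hHf_def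
  set G : ℝ → ℝ := fun τ => ∫ r in (0:ℝ)..R, r ^ n * Vt τ r with hG_def
  have hHf0 : Hf 0 = H₀ := hH0
  have hrpow_cont : ∀ p : ℝ, 0 ≤ p → Continuous fun r : ℝ => r ^ p := by
    intro p hp
    exact continuous_iff_continuousAt.2 fun x => Real.continuousAt_rpow_const x p (Or.inr hp)
  have hjoint : ContinuousOn (fun p : ℝ × ℝ => p.2 ^ n * Vt p.1 p.2) S :=
    (((hrpow_cont n hn.le).comp continuous_snd).continuousOn).mul hVtcont
  -- product integrability
  have hprod_int : ∀ t ∈ Set.Icc (0:ℝ) T,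
      Integrable (Function.uncurry fun r τ => r ^ n * Vt τ r)
        ((volume.restrict (Set.Ioc 0 R)).prod (volume.restrict (Set.Ioc 0 t))) := by
    intro t ht
    rw [Measure.prod_restrict, ← Measure.volume_eq_prod]
    have hswap : ContinuousOn (fun p : ℝ × ℝ => ((p.2, p.1) : ℝ × ℝ))
        (Set.Icc 0 R ×ˢ Set.Icc 0 t) := (continuous_snd.prodMk continuous_fst).continuousOn
    have hmaps : Set.MapsTo (fun p : ℝ × ℝ => ((p.2, p.1) : ℝ × ℝ))
        (Set.Icc 0 R ×ˢ Set.Icc 0 t) S := by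
      intro p hp
      exact hmemS (Set.Icc_subset_Icc le_rfl ht.2 hp.2) hp.1.1
    have hcont : ContinuousOn (Function.uncurry fun r τ => r ^ n * Vt τ r)
        (Set.Icc 0 R ×ˢ Set.Icc 0 t) := hjoint.comp hswap hmaps
    exact (hcont.integrableOn_compact (isCompact_Icc.prod isCompact_Icc)).mono_set
      (Set.prod_mono Set.Ioc_subset_Icc_self Set.Ioc_subset_Icc_self)
  have hGint : ∀ t ∈ Set.Icc (0:ℝ) T, IntegrableOn G (Set.Ioc 0 t) := by
    intro t ht
    have h1 := ((hprod_int t ht).swap).integral_prod_left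
    have : G = fun τ => ∫ r in Set.Ioc (0:ℝ) R, r ^ n * Vt τ r := by
      funext τ
      exact intervalIntegral.integral_of_le hR.le
    rw [this]
    exact h1
  -- representation of Hf as primitive
  have hVint_r : ∀ t ∈ Set.Icc (0:ℝ) T,
      IntervalIntegrable (fun r => r ^ n * V t r) volume 0 R := by
    intro t ht
    apply ContinuousOn.intervalIntegrable
    rw [Set.uIcc_of_le hR.le]
    exact ((hrpow_cont n hn.le).continuousOn).mul
      ((hVcont_t t ht).mono (fun x hx => hx.1))
  have hrep : ∀ t ∈ Set.Icc (0:ℝ) T, Hf t = H₀ + ∫ τ in (0:ℝ)..t, G τ := by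
    intro t ht
    have hsub : Hf t - Hf 0 = ∫ r in (0:ℝ)..R, (r ^ n * V t r - r ^ n * V 0 r) :=
      (intervalIntegral.integral_sub (hVint_r t ht) (hVint_r 0 (Set.left_mem_Icc.2 hT0.le))).symm
    have hcongr : (∫ r in (0:ℝ)..R, (r ^ n * V t r - r ^ n * V 0 r))
        = ∫ r in (0:ℝ)..R, (∫ τ in (0:ℝ)..t, r ^ n * Vt τ r) := by
      apply intervalIntegral.integral_congr
      intro r hr
      rw [Set.uIcc_of_le hR.le] at hr
      have h1 : (∫ τ in (0:ℝ)..t, Vt τ r) = V t r - V 0 r := hFTCt t ht r hr.1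
      show r ^ n * V t r - r ^ n * V 0 r = ∫ τ in (0:ℝ)..t, r ^ n * Vt τ r
      rw [← mul_sub, ← h1, ← intervalIntegral.integral_const_mul]
    have hfub : (∫ r in (0:ℝ)..R, (∫ τ in (0:ℝ)..t, r ^ n * Vt τ r))
        = ∫ τ in (0:ℝ)..t, G τ := by
      have hGofτ : ∀ τ, G τ = ∫ r in Set.Ioc (0:ℝ) R, r ^ n * Vt τ r := by
        intro τ; exact intervalIntegral.integral_of_le hR.le
      rw [intervalIntegral.integral_of_le hR.le, intervalIntegral.integral_of_le ht.1]
      simp only [intervalIntegral.integral_of_le ht.1, hGofτ]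
      exact MeasureTheory.integral_integral_swap (hprod_int t ht)
    have := hsub.trans (hcongr.trans hfub)
    rw [hHf0] at this
    linarith
  -- continuity of Hf
  have hGIccInt : IntegrableOn G (Set.uIcc 0 T) := by
    rw [Set.uIcc_of_le hT0.le, integrableOn_Icc_iff_integrableOn_Ioc]
    exact hGint T (Set.right_mem_Icc.2 hT0.le)
  have hHcont : ContinuousOn Hf (Set.Icc 0 T) := by
    have h1 := intervalIntegral.continuousOn_primitive_interval hGIccInt
    rw [Set.uIcc_of_le hT0.le] at h1
    exact ContinuousOn.congr (continuousOn_const.add h1) (fun t ht => hrep t ht)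
  -- auxiliary integrability lemma
  have hmul_int : ∀ p : ℝ, -1 < p → ∀ w : ℝ → ℝ, ContinuousOn w (Set.Icc 0 R) →
      IntervalIntegrable (fun r => r ^ p * w r) volume 0 R := by
    intro p hp w hw
    exact (intervalIntegrable_rpow' hp).mul_continuousOn (by rwa [Set.uIcc_of_le hR.le])
  -- *** the key differential inequality ***
  have hGlow : ∀ τ ∈ Set.Ioo (0:ℝ) T, c * Hf τ ^ 2 ≤ G τ := by
    intro τ hτ
    have hτI : τ ∈ Set.Icc (0:ℝ) T := Set.Ioo_subset_Icc_self hτ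
    have hIccIci : Set.Icc (0:ℝ) R ⊆ Set.Ici 0 := fun x hx => hx.1
    have hVc : ContinuousOn (fun r => V τ r) (Set.Icc 0 R) := (hVcont_t τ hτI).mono hIccIci
    have hVrc : ContinuousOn (fun r => Vr τ r) (Set.Icc 0 R) := (hVrcont_t τ hτI).mono hIccIci
    have hVtc : ContinuousOn (fun r => Vt τ r) (Set.Icc 0 R) := (hVtcont_t τ hτI).mono hIccIci
    have hρc : ContinuousOn (fun r => ρ τ r) (Set.Icc 0 R) := (hρcont_t τ hτI).mono hIccIci
    set b : ℝ := ∫ r in (0:ℝ)..R, r ^ (n-1) * (V τ r)^2 with hb_def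
    set κ : ℝ := K * γ / (γ - 1) with hκ_def
    have hκpos : 0 < κ := by
      apply div_pos (by positivity) (by linarith)
    set p' : ℝ → ℝ := fun r => deriv (fun s => ρ τ s ^ (γ - 1)) r with hp'_def
    set FF : ℝ → ℝ := fun r =>
      alphaConst N * r ^ ((1:ℝ) - N) * ∫ s in (0:ℝ)..r, ρ τ s * s ^ (N - 1) with hFF_def
    -- momentum equation rewritten
    have hmom' : ∀ r ∈ Set.Ioo (0:ℝ) R,
        Vt τ r = FF r - V τ r * Vr τ r - κ * p' r := by
      intro r hr
      have h1 : deriv (fun t' => V t' r) τ = Vt τ r := (hVtA τ hτ r (le_of_lt hr.1)).deriv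
      have h2 : deriv (fun s => V τ s) r = Vr τ r := (hVrA τ hτI r hr.1).deriv
      have h3 := hmom τ hτI r hr
      rw [h1, h2] at h3
      rw [hFF_def, hκ_def, hp'_def]
      simp only
      linarith
    -- FF : nonnegativity, bound, integrability
    obtain ⟨Mρ, hMρ⟩ := IsCompact.exists_bound_of_continuousOn isCompact_Icc hρc
    have hMρ0 : 0 ≤ Mρ := le_trans (norm_nonneg _) (hMρ 0 ⟨le_rfl, hR.le⟩)
    have hFF_nonneg : ∀ r ∈ Set.Icc (0:ℝ) R, 0 ≤ FF r := by
      intro r hr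
      apply mul_nonneg (mul_nonneg (alphaConst_nonneg N hN) (Real.rpow_nonneg hr.1 _))
      apply intervalIntegral.integral_nonneg hr.1
      intro s hs
      exact mul_nonneg (hρnn τ s) (pow_nonneg hs.1 _)
    have hNn : (N - 1) + 1 = N := Nat.succ_pred_eq_of_pos hN
    have hNcast : ((N - 1 : ℕ) : ℝ) + 1 = (N : ℝ) := by
      have := congrArg (Nat.cast : ℕ → ℝ) hNn
      push_cast at this
      linarith
    have hNpos : (0:ℝ) < (N:ℝ) := by exact_mod_cast hN
    have hFF_le : ∀ r ∈ Set.Ioc (0:ℝ) R, FF r ≤ alphaConst N * Mρ * R / N := by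
      intro r hr
      have hr0 : 0 < r := hr.1
      have hIle : (∫ s in (0:ℝ)..r, ρ τ s * s ^ (N - 1)) ≤ Mρ * (r ^ N / N) := by
        have hint1 : IntervalIntegrable (fun s => ρ τ s * s ^ (N - 1)) volume 0 r := by
          apply ContinuousOn.intervalIntegrable
          rw [Set.uIcc_of_le hr0.le]
          exact ((hρc.mono (Set.Icc_subset_Icc le_rfl hr.2)).mul
            (continuous_pow _).continuousOn)
        have hint2 : IntervalIntegrable (fun s : ℝ => Mρ * s ^ (N - 1)) volume 0 r :=
          (continuous_const.mul (continuous_pow _)).intervalIntegrable _ _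
        have hle : ∀ s ∈ Set.Icc (0:ℝ) r, ρ τ s * s ^ (N - 1) ≤ Mρ * s ^ (N - 1) := by
          intro s hs
          apply mul_le_mul_of_nonneg_right _ (pow_nonneg hs.1 _)
          calc ρ τ s ≤ |ρ τ s| := le_abs_self _
            _ ≤ Mρ := by
                have := hMρ s ⟨hs.1, hs.2.trans hr.2⟩
                rwa [Real.norm_eq_abs] at this
        calc (∫ s in (0:ℝ)..r, ρ τ s * s ^ (N - 1))
            ≤ ∫ s in (0:ℝ)..r, Mρ * s ^ (N - 1) :=
              intervalIntegral.integral_mono_on hr0.le hint1 hint2 hle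
          _ = Mρ * (r ^ N / N) := by
              rw [intervalIntegral.integral_const_mul, integral_pow, hNn]
              rw [zero_pow (by omega : N ≠ 0), hNcast]
              ring
      have hrw : r ^ ((1:ℝ) - N) * r ^ N = r := by
        rw [← Real.rpow_natCast r N, ← Real.rpow_add hr0]
        norm_num
      calc FF r = alphaConst N * r ^ ((1:ℝ) - N) * ∫ s in (0:ℝ)..r, ρ τ s * s ^ (N - 1) := rfl
        _ ≤ alphaConst N * r ^ ((1:ℝ) - N) * (Mρ * (r ^ N / N)) := by
            apply mul_le_mul_of_nonneg_left hIle
            exact mul_nonneg (alphaConst_nonneg N hN) (Real.rpow_nonneg hr0.le _)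
        _ = alphaConst N * Mρ / N * (r ^ ((1:ℝ) - N) * r ^ N) := by ring
        _ = alphaConst N * Mρ / N * r := by rw [hrw]
        _ ≤ alphaConst N * Mρ / N * R := by
            apply mul_le_mul_of_nonneg_left hr.2
            exact div_nonneg (mul_nonneg (alphaConst_nonneg N hN) hMρ0) hNpos.le
        _ = alphaConst N * Mρ * R / N := by ring
    have hIprim : ContinuousOn (fun r => ∫ s in (0:ℝ)..r, ρ τ s * s ^ (N - 1))
        (Set.Icc 0 R) := by
      have h1 : IntegrableOn (fun s => ρ τ s * s ^ (N - 1)) (Set.uIcc 0 R) volume := by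
        rw [Set.uIcc_of_le hR.le]
        exact (hρc.mul (continuous_pow _).continuousOn).integrableOn_compact isCompact_Icc
      have := intervalIntegral.continuousOn_primitive_interval h1
      rwa [Set.uIcc_of_le hR.le] at this
    have hFFii : IntervalIntegrable FF volume 0 R := by
      rw [intervalIntegrable_iff_integrableOn_Ioc_of_le hR.le]
      have hcFF : ContinuousOn FF (Set.Ioc 0 R) := by
        apply ContinuousOn.mul
        · apply ContinuousOn.mul continuousOn_const
          intro x hx
          exact (Real.continuousAt_rpow_const x _ (Or.inl (ne_of_gt hx.1))).continuousWithinAt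
        · exact hIprim.mono Set.Ioc_subset_Icc_self
      refine Integrable.mono' (integrable_const (alphaConst N * Mρ * R / N))
        (hcFF.aestronglyMeasurable measurableSet_Ioc) ?_
      rw [ae_restrict_iff' measurableSet_Ioc]
      refine Filter.Eventually.of_forall (fun r hr => ?_)
      rw [Real.norm_eq_abs, abs_of_nonneg (hFF_nonneg r (Set.Ioc_subset_Icc_self hr))]
      exact hFF_le r hr
    -- A2 integrability
    have hRHS_int : IntervalIntegrable
        (fun r => r ^ n * (κ⁻¹ * (FF r - Vt τ r - V τ r * Vr τ r))) volume 0 R := by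
      have h1 : IntervalIntegrable (fun r => r ^ n * FF r) volume 0 R :=
        hFFii.continuousOn_mul (by
          rw [Set.uIcc_of_le hR.le]; exact (hrpow_cont n hn.le).continuousOn)
      have h2 : IntervalIntegrable (fun r => r ^ n * Vt τ r) volume 0 R := by
        apply ContinuousOn.intervalIntegrable
        rw [Set.uIcc_of_le hR.le]
        exact ((hrpow_cont n hn.le).continuousOn).mul hVtc
      have h3 : IntervalIntegrable (fun r => r ^ n * (V τ r * Vr τ r)) volume 0 R := by
        apply ContinuousOn.intervalIntegrable
        rw [Set.uIcc_of_le hR.le]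
        exact ((hrpow_cont n hn.le).continuousOn).mul (hVc.mul hVrc)
      have heq : (fun r => r ^ n * (κ⁻¹ * (FF r - Vt τ r - V τ r * Vr τ r)))
          = fun r => κ⁻¹ * ((r ^ n * FF r - r ^ n * Vt τ r) - r ^ n * (V τ r * Vr τ r)) := by
        funext r; ring
      rw [heq]
      exact ((h1.sub h2).sub h3).const_mul κ⁻¹
    have haeR : ∀ᵐ x ∂(volume.restrict (Set.Ioc (0:ℝ) R)), x ≠ R := by
      apply ae_restrict_of_ae
      rw [ae_iff]
      have : {x : ℝ | ¬ x ≠ R} = {R} := by ext x; simp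
      rw [this]
      exact measure_singleton R
    have hA2eqIoo : ∀ r ∈ Set.Ioo (0:ℝ) R,
        r ^ n * (κ⁻¹ * (FF r - Vt τ r - V τ r * Vr τ r)) = r ^ n * p' r := by
      intro r hr
      have h1 := hmom' r hr
      have hκne : κ ≠ 0 := hκpos.ne'
      have h2 : FF r - Vt τ r - V τ r * Vr τ r = κ * p' r := by linarith
      rw [h2, inv_mul_cancel_left₀ hκne]
    have hA2int : IntervalIntegrable (fun r => r ^ n * p' r) volume 0 R := by
      rw [intervalIntegrable_iff_integrableOn_Ioc_of_le hR.le]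
      rw [intervalIntegrable_iff_integrableOn_Ioc_of_le hR.le] at hRHS_int
      apply hRHS_int.congr
      filter_upwards [haeR, ae_restrict_mem measurableSet_Ioc] with x hx hxmem
      exact hA2eqIoo x ⟨hxmem.1, lt_of_le_of_ne hxmem.2 hx⟩
    -- IBP 1 : velocity term
    have hVR0 : V τ R = 0 := (hsupp τ R le_rfl).2
    have hρR0 : ρ τ R = 0 := (hsupp τ R le_rfl).1
    have hIBP1 : (∫ r in (0:ℝ)..R,
        ((n/2) * (r ^ (n-1) * (V τ r)^2) + r ^ n * (V τ r * Vr τ r))) = 0 := by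
      set g : ℝ → ℝ := fun r => r ^ n * (V τ r)^2 / 2 with hg_def
      have hgcont : ContinuousOn g (Set.Icc 0 R) :=
        (((hrpow_cont n hn.le).continuousOn.mul (hVc.pow 2)).div_const 2)
      have hgR : g R = 0 := by simp [hg_def, hVR0]
      have hg0 : g 0 = 0 := by simp [hg_def, Real.zero_rpow hn.ne']
      have hderiv : ∀ x ∈ Set.Ioo (0:ℝ) R, HasDerivAt g
          ((n/2) * (x ^ (n-1) * (V τ x)^2) + x ^ n * (V τ x * Vr τ x)) x := by
        intro x hx
        have h1 : HasDerivAt (fun r : ℝ => r ^ n) (n * x ^ (n-1)) x :=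
          Real.hasDerivAt_rpow_const (Or.inl hx.1.ne')
        have h2 : HasDerivAt (fun r => V τ r) (Vr τ x) x := hVrA τ hτI x hx.1
        have h3 := (h1.mul (h2.pow 2)).div_const 2
        exact h3.congr_deriv (by simp only [Pi.pow_apply]; ring)
      have hint : IntervalIntegrable (fun x =>
          (n/2) * (x ^ (n-1) * (V τ x)^2) + x ^ n * (V τ x * Vr τ x)) volume 0 R := by
        apply IntervalIntegrable.add
        · exact (hmul_int (n-1) (by linarith) (fun r => (V τ r)^2) (hVc.pow 2)).const_mul (n/2)
        · apply ContinuousOn.intervalIntegrable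
          rw [Set.uIcc_of_le hR.le]
          exact ((hrpow_cont n hn.le).continuousOn).mul (hVc.mul hVrc)
      have := intervalIntegral.integral_eq_sub_of_hasDeriv_right_of_le hR.le hgcont
        (fun x hx => (hderiv x hx).hasDerivWithinAt) hint
      rw [hgR, hg0] at this
      simpa using this
    have hA1val : (∫ r in (0:ℝ)..R, r ^ n * (V τ r * Vr τ r)) = -((n/2) * b) := by
      have hi1 : IntervalIntegrable (fun x => (n/2) * (x ^ (n-1) * (V τ x)^2)) volume 0 R :=
        (hmul_int (n-1) (by linarith) (fun r => (V τ r)^2) (hVc.pow 2)).const_mul (n/2)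
      have hi2 : IntervalIntegrable (fun r => r ^ n * (V τ r * Vr τ r)) volume 0 R := by
        apply ContinuousOn.intervalIntegrable
        rw [Set.uIcc_of_le hR.le]
        exact ((hrpow_cont n hn.le).continuousOn).mul (hVc.mul hVrc)
      have hsplit := intervalIntegral.integral_add hi1 hi2
      rw [hsplit] at hIBP1
      have hval : (∫ x in (0:ℝ)..R, (n/2) * (x ^ (n-1) * (V τ x)^2)) = (n/2) * b := by
        rw [intervalIntegral.integral_const_mul, hb_def]
      linarith
    -- IBP 2 : pressure term
    have hρpow_cont : ContinuousOn (fun r => (ρ τ r) ^ (γ-1)) (Set.Icc 0 R) :=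
      hρc.rpow_const (fun x _ => Or.inr (by linarith))
    have hIBP2 : (∫ r in (0:ℝ)..R,
        (n * (r ^ (n-1) * (ρ τ r) ^ (γ-1)) + r ^ n * p' r)) = 0 := by
      set g2 : ℝ → ℝ := fun r => r ^ n * (ρ τ r) ^ (γ-1) with hg2_def
      have hg2cont : ContinuousOn g2 (Set.Icc 0 R) :=
        ((hrpow_cont n hn.le).continuousOn.mul hρpow_cont)
      have hg2R : g2 R = 0 := by
        simp [hg2_def, hρR0, Real.zero_rpow (by linarith : γ - 1 ≠ 0)]
      have hg20 : g2 0 = 0 := by simp [hg2_def, Real.zero_rpow hn.ne']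
      have hderiv2 : ∀ x ∈ Set.Ioo (0:ℝ) R, HasDerivAt g2
          (n * (x ^ (n-1) * (ρ τ x) ^ (γ-1)) + x ^ n * p' x) x := by
        intro x hx
        have h1 : HasDerivAt (fun r : ℝ => r ^ n) (n * x ^ (n-1)) x :=
          Real.hasDerivAt_rpow_const (Or.inl hx.1.ne')
        have h2 : HasDerivAt (fun s => ρ τ s ^ (γ-1)) (p' x) x :=
          (hdiffp τ hτI x hx).hasDerivAt
        have h3 := h1.mul h2
        exact h3.congr_deriv (by ring)
      have hint2 : IntervalIntegrable (fun x =>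
          n * (x ^ (n-1) * (ρ τ x) ^ (γ-1)) + x ^ n * p' x) volume 0 R := by
        apply IntervalIntegrable.add
        · exact (hmul_int (n-1) (by linarith) (fun r => (ρ τ r) ^ (γ-1)) hρpow_cont).const_mul n
        · exact hA2int
      have := intervalIntegral.integral_eq_sub_of_hasDeriv_right_of_le hR.le hg2cont
        (fun x hx => (hderiv2 x hx).hasDerivWithinAt) hint2
      rw [hg2R, hg20] at this
      simpa using this
    have hA2nonpos : (∫ r in (0:ℝ)..R, r ^ n * p' r) ≤ 0 := by
      have hi1 : IntervalIntegrable (fun x => n * (x ^ (n-1) * (ρ τ x) ^ (γ-1))) volume 0 R :=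
        (hmul_int (n-1) (by linarith) (fun r => (ρ τ r) ^ (γ-1)) hρpow_cont).const_mul n
      have hsplit := intervalIntegral.integral_add hi1 hA2int
      rw [hsplit] at hIBP2
      have hnn : 0 ≤ ∫ x in (0:ℝ)..R, n * (x ^ (n-1) * (ρ τ x) ^ (γ-1)) := by
        apply intervalIntegral.integral_nonneg hR.le
        intro u hu
        exact mul_nonneg hn.le (mul_nonneg (Real.rpow_nonneg hu.1 _)
          (Real.rpow_nonneg (hρnn τ u) _))
      linarith
    -- force term nonnegative
    have hFF2nonneg : 0 ≤ ∫ r in (0:ℝ)..R, r ^ n * FF r := by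
      apply intervalIntegral.integral_nonneg hR.le
      intro u hu
      exact mul_nonneg (Real.rpow_nonneg hu.1 _) (hFF_nonneg u hu)
    -- split G
    have hsplitG : G τ = (∫ r in (0:ℝ)..R, r ^ n * FF r)
        - (∫ r in (0:ℝ)..R, r ^ n * (V τ r * Vr τ r))
        - κ * (∫ r in (0:ℝ)..R, r ^ n * p' r) := by
      have h1 : IntervalIntegrable (fun r => r ^ n * FF r) volume 0 R :=
        hFFii.continuousOn_mul (by
          rw [Set.uIcc_of_le hR.le]; exact (hrpow_cont n hn.le).continuousOn)
      have h3 : IntervalIntegrable (fun r => r ^ n * (V τ r * Vr τ r)) volume 0 R := by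
        apply ContinuousOn.intervalIntegrable
        rw [Set.uIcc_of_le hR.le]
        exact ((hrpow_cont n hn.le).continuousOn).mul (hVc.mul hVrc)
      have h4 : IntervalIntegrable (fun r => κ * (r ^ n * p' r)) volume 0 R :=
        hA2int.const_mul κ
      have hstep : G τ = ∫ r in (0:ℝ)..R,
          (r ^ n * FF r - r ^ n * (V τ r * Vr τ r) - κ * (r ^ n * p' r)) := by
        apply intervalIntegral.integral_congr_ae
        rw [Set.uIoc_of_le hR.le]
        have haeR' : ∀ᵐ x : ℝ ∂volume, x ≠ R := by
          rw [ae_iff]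
          have : {x : ℝ | ¬ x ≠ R} = {R} := by ext x; simp
          rw [this]
          exact measure_singleton R
        filter_upwards [haeR'] with x hx hxmem
        have hxIoo : x ∈ Set.Ioo (0:ℝ) R := ⟨hxmem.1, lt_of_le_of_ne hxmem.2 hx⟩
        rw [hmom' x hxIoo]
        ring
      rw [hstep, intervalIntegral.integral_sub (h1.sub h3) h4,
        intervalIntegral.integral_sub h1 h3, intervalIntegral.integral_const_mul]
    have hGb : (n/2) * b ≤ G τ := by
      rw [hsplitG, hA1val]
      nlinarith [hFF2nonneg, hA2nonpos, hκpos]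
    -- Cauchy–Schwarz via AM–GM
    have haCS : (∫ r in (0:ℝ)..R, r ^ (n+1)) = R ^ (n+2) / (n+2) := by
      rw [integral_rpow (Or.inl (by linarith : (-1:ℝ) < n+1))]
      rw [Real.zero_rpow (by linarith : n+1+1 ≠ 0)]
      have he : n + 1 + 1 = n + 2 := by ring
      rw [he]
      ring
    have hb0 : 0 ≤ b := by
      rw [hb_def]
      apply intervalIntegral.integral_nonneg hR.le
      intro u hu
      exact mul_nonneg (Real.rpow_nonneg hu.1 _) (sq_nonneg _)
    have habs : ∀ l : ℝ, 0 < l → 2 * l * |Hf τ| ≤ l^2 * (R ^ (n+2) / (n+2)) + b := by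
      intro l hl
      have habs1 : |Hf τ| ≤ ∫ r in (0:ℝ)..R, |r ^ n * V τ r| :=
        intervalIntegral.abs_integral_le_integral_abs hR.le
      have hiabs : IntervalIntegrable (fun r => |r ^ n * V τ r|) volume 0 R := by
        apply ContinuousOn.intervalIntegrable
        rw [Set.uIcc_of_le hR.le]
        exact (((hrpow_cont n hn.le).continuousOn).mul hVc).abs
      have hiRHS : IntervalIntegrable
          (fun r => l^2 * r ^ (n+1) + r ^ (n-1) * (V τ r)^2) volume 0 R := by
        apply IntervalIntegrable.add
        · exact ((hrpow_cont (n+1) (by linarith)).intervalIntegrable _ _).const_mul (l^2)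
        · exact hmul_int (n-1) (by linarith) (fun r => (V τ r)^2) (hVc.pow 2)
      have hpt : ∀ x ∈ Set.Icc (0:ℝ) R,
          (2*l) * |x ^ n * V τ x| ≤ l^2 * x ^ (n+1) + x ^ (n-1) * (V τ x)^2 := by
        intro x hx
        have hx0 : (0:ℝ) ≤ x := hx.1
        have hxp : ∀ q : ℝ, 0 ≤ x ^ q := fun q => Real.rpow_nonneg hx0 q
        have e1 : |x ^ n * V τ x| = x ^ ((n+1)/2) * x ^ ((n-1)/2) * |V τ x| := by
          rw [abs_mul, abs_of_nonneg (hxp n), ← Real.rpow_add' hx0 (by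
            intro hcon
            apply hn.ne'
            linarith [hcon] : (n+1)/2 + (n-1)/2 ≠ 0)]
          congr 2
          ring
        set u := l * x ^ ((n+1)/2) with hu_def
        set v := x ^ ((n-1)/2) * |V τ x| with hv_def
        have h2uv : 2 * u * v ≤ u^2 + v^2 := two_mul_le_add_sq u v
        have hsq : ∀ q : ℝ, (x ^ q)^2 = x ^ (q * 2) := by
          intro q
          rw [← Real.rpow_natCast (x ^ q) 2, ← Real.rpow_mul hx0]
          norm_num
        have hu2 : u^2 = l^2 * x ^ (n+1) := by
          rw [hu_def, mul_pow, hsq]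
          congr 2
          ring
        have hv2 : v^2 = x ^ (n-1) * (V τ x)^2 := by
          rw [hv_def, mul_pow, hsq, sq_abs]
          congr 2
          ring
        have heq2 : (2*l) * |x ^ n * V τ x| = 2 * u * v := by
          rw [e1, hu_def, hv_def]
          ring
        rw [heq2, ← hu2, ← hv2]
        exact h2uv
      have hmono := intervalIntegral.integral_mono_on hR.le (hiabs.const_mul (2*l)) hiRHS hpt
      rw [intervalIntegral.integral_const_mul] at hmono
      have hsum : (∫ r in (0:ℝ)..R, (l^2 * r ^ (n+1) + r ^ (n-1) * (V τ r)^2))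
          = l^2 * (R ^ (n+2) / (n+2)) + b := by
        rw [intervalIntegral.integral_add
          (((hrpow_cont (n+1) (by linarith)).intervalIntegrable _ _).const_mul (l^2))
          (hmul_int (n-1) (by linarith) (fun r => (V τ r)^2) (hVc.pow 2)),
          intervalIntegral.integral_const_mul, haCS, hb_def]
      rw [hsum] at hmono
      have : 2 * l * |Hf τ| ≤ (2*l) * ∫ r in (0:ℝ)..R, |r ^ n * V τ r| := by
        have := mul_le_mul_of_nonneg_left habs1 (by positivity : (0:ℝ) ≤ 2*l)
        linarith
      linarith
    have hCS : Hf τ ^ 2 ≤ (R ^ (n+2) / (n+2)) * b := cs_aux (by positivity) hb0 habs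
    have hkey : c * (R ^ (n+2) / (n+2)) ≤ n/2 := by
      have hval : c * (R ^ (n+2) / (n+2)) = n * (n+1) / (2*(n+2)) := by
        rw [hc_def]
        field_simp
      rw [hval, div_le_div_iff₀ (by linarith) (by norm_num)]
      nlinarith
    calc c * Hf τ ^ 2 ≤ c * ((R ^ (n+2) / (n+2)) * b) :=
          mul_le_mul_of_nonneg_left hCS hc.le
      _ = (c * (R ^ (n+2) / (n+2))) * b := by ring
      _ ≤ (n/2) * b := mul_le_mul_of_nonneg_right hkey hb0
      _ ≤ G τ := hGb
  -- *** Riccati comparison and contradiction ***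
  have hH2ii : ∀ t ∈ Set.Icc (0:ℝ) T, IntervalIntegrable (fun τ => Hf τ ^ 2) volume 0 t := by
    intro t ht
    apply ContinuousOn.intervalIntegrable
    rw [Set.uIcc_of_le ht.1]
    exact ((hHcont.mono (Set.Icc_subset_Icc le_rfl ht.2)).pow 2)
  set ψ : ℝ → ℝ := fun t => H₀ + c * ∫ τ in (0:ℝ)..t, Hf τ ^ 2 with hψ_def
  have hψpos : ∀ t ∈ Set.Icc (0:ℝ) T, 0 < ψ t := by
    intro t ht
    have h1 : 0 ≤ ∫ τ in (0:ℝ)..t, Hf τ ^ 2 :=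
      intervalIntegral.integral_nonneg ht.1 (fun u _ => sq_nonneg _)
    have := mul_nonneg hc.le h1
    simp only [hψ_def]
    linarith
  have hGii : ∀ t ∈ Set.Icc (0:ℝ) T, IntervalIntegrable G volume 0 t := by
    intro t ht
    rw [intervalIntegrable_iff_integrableOn_Ioc_of_le ht.1]
    exact hGint t ht
  have hψleH : ∀ t ∈ Set.Icc (0:ℝ) T, ψ t ≤ Hf t := by
    intro t ht
    rw [hrep t ht]
    have hae : (fun τ => c * Hf τ ^ 2) ≤ᵐ[volume.restrict (Set.Icc 0 t)] G := by
      have hfin : (volume : Measure ℝ) ({0, T} : Set ℝ) = 0 :=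
        ((Set.finite_singleton T).insert 0).measure_zero _
      have h1 : ∀ᵐ x ∂(volume.restrict (Set.Icc (0:ℝ) t)), x ∉ ({0, T} : Set ℝ) := by
        apply ae_restrict_of_ae
        rw [ae_iff]
        have : {x : ℝ | ¬ x ∉ ({0, T} : Set ℝ)} = ({0, T} : Set ℝ) := by
          ext x; simp; tauto
        rwa [this]
      filter_upwards [h1, ae_restrict_mem measurableSet_Icc] with x hx hxt
      simp only [Set.mem_insert_iff, Set.mem_singleton_iff, not_or] at hx
      have hx0 : 0 < x := lt_of_le_of_ne hxt.1 (Ne.symm hx.1)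
      have hxT : x < T := lt_of_le_of_ne (hxt.2.trans ht.2) hx.2
      exact hGlow x ⟨hx0, hxT⟩
    have hmono := intervalIntegral.integral_mono_ae_restrict ht.1
      ((hH2ii t ht).const_mul c) (hGii t ht) hae
    rw [intervalIntegral.integral_const_mul] at hmono
    simp only [hψ_def]
    linarith
  have hψcont : ContinuousOn ψ (Set.Icc 0 T) := by
    have h1 : IntegrableOn (fun τ => Hf τ ^ 2) (Set.uIcc 0 T) volume := by
      rw [Set.uIcc_of_le hT0.le]
      exact ((hHcont.pow 2)).integrableOn_compact isCompact_Icc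
    have h2 := intervalIntegral.continuousOn_primitive_interval h1
    rw [Set.uIcc_of_le hT0.le] at h2
    exact continuousOn_const.add (continuousOn_const.mul h2)
  set φ : ℝ → ℝ := fun t => (ψ t)⁻¹ + c * t with hφ_def
  have hψderiv : ∀ x ∈ Set.Ioo (0:ℝ) T, HasDerivAt ψ (c * Hf x ^ 2) x := by
    intro x hx
    have hmeas : StronglyMeasurableAtFilter (fun τ => Hf τ ^ 2) (𝓝 x) volume :=
      ⟨Set.Ioo 0 T, Ioo_mem_nhds hx.1 hx.2,
        (((hHcont.mono Set.Ioo_subset_Icc_self).pow 2)).aestronglyMeasurable measurableSet_Ioo⟩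
    have hca : ContinuousAt (fun τ => Hf τ ^ 2) x :=
      ((hHcont.continuousAt (Icc_mem_nhds hx.1 hx.2)).pow 2)
    have h1 := intervalIntegral.integral_hasDerivAt_right
      (hH2ii x (Set.Ioo_subset_Icc_self hx)) hmeas hca
    exact ((h1.const_mul c).const_add H₀)
  have hφderiv : ∀ x ∈ Set.Ioo (0:ℝ) T,
      HasDerivAt φ (-(c * Hf x ^ 2) / (ψ x)^2 + c) x := by
    intro x hx
    have h0 : ψ x ≠ 0 := (hψpos x (Set.Ioo_subset_Icc_self hx)).ne'
    have h1 := (hψderiv x hx).inv h0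
    have h2 : HasDerivAt (fun t : ℝ => c * t) c x := by
      simpa using (hasDerivAt_id x).const_mul c
    exact h1.add h2
  have hanti : AntitoneOn φ (Set.Icc 0 T) := by
    apply antitoneOn_of_deriv_nonpos (convex_Icc 0 T)
    · apply ContinuousOn.add
      · exact hψcont.inv₀ (fun x hx => (hψpos x hx).ne')
      · exact (continuous_const.mul continuous_id).continuousOn
    · rw [interior_Icc]
      intro x hx
      exact (hφderiv x hx).differentiableAt.differentiableWithinAt
    · rw [interior_Icc]
      intro x hx
      rw [(hφderiv x hx).deriv]
      have hxI : x ∈ Set.Icc (0:ℝ) T := Set.Ioo_subset_Icc_self hx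
      have h1 : ψ x ≤ Hf x := hψleH x hxI
      have h2 : 0 < ψ x := hψpos x hxI
      have h3 : (ψ x)^2 ≤ (Hf x)^2 := by nlinarith
      have h4 : c ≤ c * Hf x ^ 2 / (ψ x)^2 := by
        rw [le_div_iff₀ (by positivity)]
        nlinarith
      have h5 : -(c * Hf x ^ 2) / (ψ x)^2 = -(c * Hf x ^ 2 / (ψ x)^2) := by ring
      rw [h5]
      linarith
  have hfinal : φ T ≤ φ 0 :=
    hanti (Set.left_mem_Icc.2 hT0.le) (Set.right_mem_Icc.2 hT0.le) hT0.le
  have hψ0 : ψ 0 = H₀ := by simp [hψ_def]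
  have hψT : 0 < ψ T := hψpos T (Set.right_mem_Icc.2 hT0.le)
  have hφT : φ T = (ψ T)⁻¹ + c * T := rfl
  have hφ0 : φ 0 = H₀⁻¹ := by
    simp [hφ_def, hψ0]
  rw [hφT, hφ0, hcT] at hfinal
  have : (ψ T)⁻¹ ≤ 0 := by linarith
  exact absurd this (not_le.2 (inv_pos.2 hψT))
end

section
/- Let n > 0 be a real number, let R > 0, K > 0, γ > 1. Let H₀ > 0 and set T := 2R^{n+2}/(n(n+1)H₀). Then there exist no C¹ functions ρ, V : [0,T] × [0,∞) → ℝ such that: (i) ρ(t,r) ≥ 0 for all t, r; (ii) ρ(t,r) = 0 and V(t,r) = 0 whenever r ≥ R (compact support / non-slip boundary condition); (iii) for each t the map r ↦ ρ(t,r)^{γ−1} is differentiable on (0,R), and for all t ∈ [0,T] and 0 < r < R the radial momentum equation of the compressible Euler equations holds: ∂ₜV(t,r) + V(t,r)·∂ᵣV(t,r) + (Kγ/(γ−1))·∂ᵣ(ρ(t,r)^{γ−1}) = 0; (iv) ∫₀^R r^n V(0,r) dr = H₀. In other words, such a solution blows up on or before the finite time T = 2R^{n+2}/(n(n+1)H₀).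 -/
open Set MeasureTheory intervalIntegral Metric Function

set_option maxHeartbeats 1000000

/-- Blowup on or before `T = 2R^{n+2}/(n(n+1)H₀)` for the `C¹` solutions of the
compressible isentropic Euler equations (`δ = 0`) with pressure (`K > 0`, `γ > 1`),
in radial symmetry, with compact support in `[0,R]` and initial functional
`H₀ = ∫₀^R rⁿ V₀ dr > 0`: no such solution exists on all of `[0,T]`. -/
theorem blowup_euler_with_pressure
    (n R K γ H₀ T : ℝ)
    (hn : 0 < n) (hR : 0 < R) (hK : 0 < K) (hγ : 1 < γ) (hH₀ : 0 < H₀)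
    (hT : T = 2 * R ^ (n + 2) / (n * (n + 1) * H₀))
    (ρ V : ℝ → ℝ → ℝ)
    (hρC1 : ContDiffOn ℝ 1 (Function.uncurry ρ) (Set.Icc 0 T ×ˢ Set.Ici 0))
    (hVC1 : ContDiffOn ℝ 1 (Function.uncurry V) (Set.Icc 0 T ×ˢ Set.Ici 0))
    (hρnn : ∀ t r, 0 ≤ ρ t r)
    (hsupp : ∀ t r, R ≤ r → ρ t r = 0 ∧ V t r = 0)
    (hdiffp : ∀ t ∈ Set.Icc (0:ℝ) T, ∀ r ∈ Set.Ioo (0:ℝ) R,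
      DifferentiableAt ℝ (fun s => ρ t s ^ (γ - 1)) r)
    (hmom : ∀ t ∈ Set.Icc (0:ℝ) T, ∀ r ∈ Set.Ioo (0:ℝ) R,
      deriv (fun τ => V τ r) t + V t r * deriv (fun s => V t s) r
        + (K * γ / (γ - 1)) * deriv (fun s => ρ t s ^ (γ - 1)) r = 0)
    (hH0 : (∫ r in (0:ℝ)..R, r ^ n * V 0 r) = H₀) :
    False := by
  have hγ1 : (0:ℝ) < γ - 1 := by linarith
  have hRp : (0:ℝ) < R ^ (n + 2) := Real.rpow_pos_of_pos hR _
  have hT0 : 0 < T := by rw [hT]; positivity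
  have hγ0 : (0:ℝ) < γ := by linarith
  set c := K * γ / (γ - 1) with hcdef
  have hc0 : 0 < c := by rw [hcdef]; positivity
  set S := Set.Icc (0:ℝ) T ×ˢ Set.Ici (0:ℝ) with hSdef
  set F := fderivWithin ℝ (Function.uncurry V) S with hFdef
  have hFcont : ContinuousOn F S :=
    hVC1.continuousOn_fderivWithin ((uniqueDiffOn_Icc hT0).prod (uniqueDiffOn_Ici 0)) le_rfl
  set Wt : ℝ → ℝ → ℝ := fun t r => F (t, r) (1, 0) with hWtdef
  set Wr : ℝ → ℝ → ℝ := fun t r => F (t, r) (0, 1) with hWrdef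
  -- membership helpers
  have hmemS : ∀ t ∈ Icc (0:ℝ) T, ∀ r ∈ Ici (0:ℝ), ((t, r) : ℝ × ℝ) ∈ S := by
    intro t ht r hr; exact ⟨ht, hr⟩
  have hnhdsS : ∀ t ∈ Ioo (0:ℝ) T, ∀ r ∈ Ioi (0:ℝ), S ∈ nhds ((t, r) : ℝ × ℝ) := by
    intro t ht r hr
    rw [← mem_interior_iff_mem_nhds, hSdef, interior_prod_eq, interior_Icc, interior_Ici]
    exact ⟨ht, hr⟩
  have hVdiff : ∀ t ∈ Ioo (0:ℝ) T, ∀ r ∈ Ioi (0:ℝ),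
      HasFDerivAt (Function.uncurry V) (F (t, r)) (t, r) := by
    intro t ht r hr
    have hd : DifferentiableAt ℝ (Function.uncurry V) (t, r) :=
      ((hVC1.differentiableOn one_ne_zero) (t, r)
        (hmemS t ⟨ht.1.le, ht.2.le⟩ r (mem_Ici.2 (mem_Ioi.1 hr).le))).differentiableAt (hnhdsS t ht r hr)
    have hfd : F (t, r) = fderiv ℝ (Function.uncurry V) (t, r) := by
      rw [hFdef]; exact fderivWithin_of_mem_nhds (hnhdsS t ht r hr)
    rw [hfd]; exact hd.hasFDerivAt
  have hVt : ∀ t ∈ Ioo (0:ℝ) T, ∀ r ∈ Ioi (0:ℝ),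
      HasDerivAt (fun τ => V τ r) (Wt t r) t := by
    intro t ht r hr
    have hline : HasDerivAt (fun τ : ℝ => ((τ, r) : ℝ × ℝ)) ((1:ℝ), (0:ℝ)) t :=
      (hasDerivAt_id t).prodMk (hasDerivAt_const t r)
    exact (hVdiff t ht r hr).comp_hasDerivAt t hline
  have hVr : ∀ t ∈ Ioo (0:ℝ) T, ∀ r ∈ Ioi (0:ℝ),
      HasDerivAt (fun s => V t s) (Wr t r) r := by
    intro t ht r hr
    have hline : HasDerivAt (fun s : ℝ => ((t, s) : ℝ × ℝ)) ((0:ℝ), (1:ℝ)) r :=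
      (hasDerivAt_const r t).prodMk (hasDerivAt_id r)
    exact (hVdiff t ht r hr).comp_hasDerivAt r hline
  -- bounds on the compact set
  have hKcpt : IsCompact (Icc (0:ℝ) T ×ˢ Icc (0:ℝ) R) := isCompact_Icc.prod isCompact_Icc
  have hKsub : (Icc (0:ℝ) T ×ˢ Icc (0:ℝ) R) ⊆ S :=
    Set.prod_mono_right Icc_subset_Ici_self
  obtain ⟨M, hM⟩ : ∃ M, ∀ z ∈ Icc (0:ℝ) T ×ˢ Icc (0:ℝ) R, ‖F z‖ ≤ M :=
    hKcpt.exists_bound_of_continuousOn (hFcont.mono hKsub)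
  have hM0 : 0 ≤ M := le_trans (norm_nonneg _)
    (hM (0, 0) ⟨⟨le_rfl, hT0.le⟩, ⟨le_rfl, hR.le⟩⟩)
  have hWtb : ∀ t ∈ Icc (0:ℝ) T, ∀ r ∈ Icc (0:ℝ) R, |Wt t r| ≤ M := by
    intro t ht r hr
    have h1 : ‖Wt t r‖ ≤ ‖F (t, r)‖ * ‖((1:ℝ), (0:ℝ))‖ := (F (t, r)).le_opNorm _
    have h2 : ‖((1:ℝ), (0:ℝ))‖ = 1 := by simp [Prod.norm_def]
    rw [h2, mul_one] at h1
    exact le_trans h1 (hM (t, r) ⟨ht, hr⟩)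
  obtain ⟨MV, hMV⟩ : ∃ MV, ∀ z ∈ Icc (0:ℝ) T ×ˢ Icc (0:ℝ) R, ‖Function.uncurry V z‖ ≤ MV :=
    hKcpt.exists_bound_of_continuousOn (hVC1.continuousOn.mono hKsub)
  have hVb : ∀ t ∈ Icc (0:ℝ) T, ∀ r ∈ Icc (0:ℝ) R, |V t r| ≤ MV := by
    intro t ht r hr; exact hMV (t, r) ⟨ht, hr⟩
  have hMV0 : 0 ≤ MV := le_trans (abs_nonneg _) (hVb 0 ⟨le_rfl, hT0.le⟩ 0 ⟨le_rfl, hR.le⟩)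
  -- continuity slices
  have hVcont : ∀ t ∈ Icc (0:ℝ) T, ContinuousOn (fun r => V t r) (Ici (0:ℝ)) := by
    intro t ht
    exact hVC1.continuousOn.comp
      (Continuous.continuousOn (continuous_const.prodMk continuous_id))
      (fun r hr => hmemS t ht r hr)
  have hρcont : ∀ t ∈ Icc (0:ℝ) T, ContinuousOn (fun r => ρ t r) (Ici (0:ℝ)) := by
    intro t ht
    exact hρC1.continuousOn.comp
      (Continuous.continuousOn (continuous_const.prodMk continuous_id))
      (fun r hr => hmemS t ht r hr)
  have hWtcont : ∀ t ∈ Icc (0:ℝ) T, ContinuousOn (fun r => Wt t r) (Ici (0:ℝ)) := by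
    intro t ht
    exact ((ContinuousLinearMap.apply ℝ ℝ ((1:ℝ),(0:ℝ))).continuous.comp_continuousOn
      hFcont).comp (Continuous.continuousOn (continuous_const.prodMk continuous_id))
      (fun r hr => hmemS t ht r hr)
  -- the functional H
  set H : ℝ → ℝ := fun t => ∫ r in (0:ℝ)..R, r ^ n * V t r with hHdef
  -- integrability helpers
  have hboundint : ∀ (s C : ℝ), -1 < s →
      IntervalIntegrable (fun r : ℝ => C * r ^ s) volume 0 R :=
    fun s C hs => (intervalIntegral.intervalIntegrable_rpow' hs).const_mul C
  have hintb : ∀ f : ℝ → ℝ, ∀ s C : ℝ, -1 < s → ContinuousOn f (Ioc 0 R) →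
      (∀ r ∈ Ioc (0:ℝ) R, |f r| ≤ C * r ^ s) → IntervalIntegrable f volume 0 R := by
    intro f s C hs hcont hb
    rw [intervalIntegrable_iff_integrableOn_Ioc_of_le hR.le]
    apply MeasureTheory.Integrable.mono' (g := fun r => C * r ^ s)
    · exact (hboundint s C hs).1
    · exact hcont.aestronglyMeasurable measurableSet_Ioc
    · exact (ae_restrict_iff' measurableSet_Ioc).2 (Filter.Eventually.of_forall fun r hr => by
        simpa [Real.norm_eq_abs] using hb r hr)
  have hrpowc : Continuous (fun r : ℝ => r ^ n) := Real.continuous_rpow_const hn.le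
  have hrpow_le : ∀ r ∈ Ioc (0:ℝ) R, r ^ n ≤ R ^ n :=
    fun r hr => Real.rpow_le_rpow hr.1.le hr.2 hn.le
  have hrpow_nn : ∀ r : ℝ, 0 ≤ r → (0:ℝ) ≤ r ^ n := fun r hr => Real.rpow_nonneg hr n
  have hWtint : ∀ t ∈ Icc (0:ℝ) T, IntervalIntegrable (fun r => r ^ n * Wt t r) volume 0 R := by
    intro t ht
    refine hintb _ n M (by linarith) ?_ ?_
    · exact (hrpowc.continuousOn).mul ((hWtcont t ht).mono (fun r (hr : r ∈ Ioc (0:ℝ) R) => hr.1.le))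
    · intro r hr
      rw [abs_mul, abs_of_nonneg (hrpow_nn r hr.1.le), mul_comm]
      exact mul_le_mul_of_nonneg_right (hWtb t ht r ⟨hr.1.le, hr.2⟩) (hrpow_nn r hr.1.le)
  have hV2int : ∀ t ∈ Icc (0:ℝ) T,
      IntervalIntegrable (fun r => r ^ (n-1) * (V t r)^2) volume 0 R := by
    intro t ht
    refine hintb _ (n-1) (MV^2) (by linarith) ?_ ?_
    · refine ContinuousOn.mul ?_ ?_
      · exact fun r hr => (Real.continuousAt_rpow_const r (n-1)
          (Or.inl (ne_of_gt hr.1))).continuousWithinAt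
      · exact (((hVcont t ht).mono (fun r (hr : r ∈ Ioc (0:ℝ) R) => hr.1.le)).pow 2)
    · intro r hr
      rw [abs_mul, abs_of_nonneg (Real.rpow_nonneg hr.1.le _), mul_comm]
      refine mul_le_mul_of_nonneg_right ?_ (Real.rpow_nonneg hr.1.le _)
      rw [abs_pow]
      have := hVb t ht r ⟨hr.1.le, hr.2⟩
      nlinarith [abs_nonneg (V t r)]
  have hVint : ∀ t ∈ Icc (0:ℝ) T, IntervalIntegrable (fun r => r ^ n * V t r) volume 0 R := by
    intro t ht
    refine hintb _ n MV (by linarith) ?_ ?_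
    · exact (hrpowc.continuousOn).mul ((hVcont t ht).mono (fun r (hr : r ∈ Ioc (0:ℝ) R) => hr.1.le))
    · intro r hr
      rw [abs_mul, abs_of_nonneg (hrpow_nn r hr.1.le), mul_comm]
      exact mul_le_mul_of_nonneg_right (hVb t ht r ⟨hr.1.le, hr.2⟩) (hrpow_nn r hr.1.le)
  -- continuity of H on [0, T]
  have hHcont : ContinuousOn H (Icc 0 T) := by
    have h1 : ContinuousOn (fun t => ∫ r in Ioc (0:ℝ) R, r ^ n * V t r) (Icc 0 T) := by
      refine MeasureTheory.continuousOn_of_dominated (bound := fun r => R ^ n * MV) ?_ ?_ ?_ ?_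
      · intro t ht
        exact ((hrpowc.continuousOn).mul
          ((hVcont t ht).mono (fun r (hr : r ∈ Ioc (0:ℝ) R) => hr.1.le))).aestronglyMeasurable measurableSet_Ioc
      · intro t ht
        refine (ae_restrict_iff' measurableSet_Ioc).2 (Filter.Eventually.of_forall
          fun r hr => ?_)
        rw [Real.norm_eq_abs, abs_mul, abs_of_nonneg (hrpow_nn r hr.1.le)]
        exact mul_le_mul (hrpow_le r hr) (hVb t ht r ⟨hr.1.le, hr.2⟩)
          (abs_nonneg _) (hrpow_nn R hR.le)
      · exact MeasureTheory.integrable_const _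
      · refine (ae_restrict_iff' measurableSet_Ioc).2 (Filter.Eventually.of_forall
          fun r hr => ?_)
        refine ContinuousOn.mul continuousOn_const ?_
        exact hVC1.continuousOn.comp
          (Continuous.continuousOn (continuous_id.prodMk continuous_const))
          (fun t ht => hmemS t ht r hr.1.le)
    refine h1.congr fun t ht => ?_
    rw [hHdef]
    exact intervalIntegral.integral_of_le hR.le
  -- derivative of H under the integral sign
  have hHderiv : ∀ t₀ ∈ Ioo (0:ℝ) T,
      HasDerivAt H (∫ r in (0:ℝ)..R, r ^ n * Wt t₀ r) t₀ := by
    intro t₀ ht₀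
    set ε := min t₀ (T - t₀) with hεdef
    have hε : 0 < ε := lt_min ht₀.1 (by linarith [ht₀.2])
    have hball : Metric.ball t₀ ε ⊆ Ioo (0:ℝ) T := by
      intro x hx
      rw [Metric.mem_ball, Real.dist_eq, abs_lt] at hx
      constructor
      · have := min_le_left t₀ (T - t₀); linarith [hx.1]
      · have := min_le_right t₀ (T - t₀); linarith [hx.2]
    have hmain := intervalIntegral.hasDerivAt_integral_of_dominated_loc_of_deriv_le
      (F := fun x r => r ^ n * V x r) (F' := fun x r => r ^ n * Wt x r)
      (bound := fun _ => R ^ n * M) (a := 0) (b := R) (μ := volume) (x₀ := t₀) (Metric.ball_mem_nhds t₀ hε) ?_ ?_ ?_ ?_ ?_ ?_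
    · exact hmain.2
    · refine Filter.eventually_of_mem (Metric.ball_mem_nhds t₀ hε) fun x hx => ?_
      have hxT : x ∈ Icc (0:ℝ) T := Ioo_subset_Icc_self (hball hx)
      rw [uIoc_of_le hR.le]
      exact ((hrpowc.continuousOn).mul
        ((hVcont x hxT).mono (fun r (hr : r ∈ Ioc (0:ℝ) R) => hr.1.le))).aestronglyMeasurable measurableSet_Ioc
    · exact hVint t₀ (Ioo_subset_Icc_self ht₀)
    · rw [uIoc_of_le hR.le]
      exact ((hrpowc.continuousOn).mul
        ((hWtcont t₀ (Ioo_subset_Icc_self ht₀)).mono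
          (fun r (hr : r ∈ Ioc (0:ℝ) R) => hr.1.le))).aestronglyMeasurable measurableSet_Ioc
    · refine Filter.Eventually.of_forall fun r hr x hx => ?_
      rw [uIoc_of_le hR.le] at hr
      have hxT : x ∈ Icc (0:ℝ) T := Ioo_subset_Icc_self (hball hx)
      rw [Real.norm_eq_abs, abs_mul, abs_of_nonneg (hrpow_nn r hr.1.le)]
      exact mul_le_mul (hrpow_le r hr) (hWtb x hxT r ⟨hr.1.le, hr.2⟩) (abs_nonneg _)
        (hrpow_nn R hR.le)
    · exact intervalIntegrable_const
    · refine Filter.Eventually.of_forall fun r hr x hx => ?_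
      rw [uIoc_of_le hR.le] at hr
      exact (hVt x (hball hx) r hr.1).const_mul (r ^ n)
  -- key differential inequality via integration by parts
  have hkey : ∀ t ∈ Ioo (0:ℝ) T,
      (n/2) * (∫ r in (0:ℝ)..R, r ^ (n-1) * (V t r)^2) ≤ ∫ r in (0:ℝ)..R, r ^ n * Wt t r := by
    intro t ht
    have htIcc : t ∈ Icc (0:ℝ) T := Ioo_subset_Icc_self ht
    set g : ℝ → ℝ := fun r => (V t r)^2 / 2 + c * ρ t r ^ (γ - 1) with hgdef
    have hgcont : ContinuousOn g (Icc 0 R) := by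
      refine ContinuousOn.add ?_ (continuousOn_const.mul ?_)
      · exact (((hVcont t htIcc).mono Icc_subset_Ici_self).pow 2).div_const 2
      · exact ContinuousOn.rpow_const ((hρcont t htIcc).mono Icc_subset_Ici_self)
          (fun r hr => Or.inr hγ1.le)
    have hgnn : ∀ r : ℝ, 0 ≤ g r := by
      intro r
      have h1 := Real.rpow_nonneg (hρnn t r) (γ - 1)
      have h2 := sq_nonneg (V t r)
      have := mul_nonneg hc0.le h1
      rw [hgdef]; positivity
    have hglb : ∀ r : ℝ, (V t r)^2 / 2 ≤ g r := by
      intro r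
      have h1 := Real.rpow_nonneg (hρnn t r) (γ - 1)
      have := mul_nonneg hc0.le h1
      rw [hgdef]; linarith
    have hgR : g R = 0 := by
      rw [hgdef]
      simp [(hsupp t R le_rfl).1, (hsupp t R le_rfl).2, Real.zero_rpow (ne_of_gt hγ1)]
    have hg' : ∀ r ∈ Ioo (0:ℝ) R, HasDerivAt g (-(Wt t r)) r := by
      intro r hr
      have h1 : HasDerivAt (fun s => (V t s)^2 / 2) (V t r * Wr t r) r := by
        have h0 := ((hVr t ht r hr.1).mul (hVr t ht r hr.1)).div_const 2
        have e : (fun s => (V t s)^2 / 2) = (fun x => ((fun s => V t s) * fun s => V t s) x / 2) := by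
          funext s; simp only [Pi.mul_apply]; ring
        rw [e]; exact h0.congr_deriv (by ring)
      have h2 : HasDerivAt (fun s => c * ρ t s ^ (γ - 1))
          (c * deriv (fun s => ρ t s ^ (γ - 1)) r) r :=
        ((hdiffp t htIcc r hr).hasDerivAt).const_mul c
      have h3 := h1.add h2
      have hmom' := hmom t htIcc r hr
      rw [(hVt t ht r hr.1).deriv, (hVr t ht r hr.1).deriv] at hmom'
      exact h3.congr_deriv (by linarith)
    have hIoc_Ici : ∀ a : ℝ, 0 < a → Icc a R ⊆ Ici (0:ℝ) :=
      fun a ha r hr => le_trans ha.le hr.1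
    have hIoc_Icc : ∀ a : ℝ, 0 < a → Icc a R ⊆ Icc (0:ℝ) R :=
      fun a ha r hr => ⟨le_trans ha.le hr.1, hr.2⟩
    have hstep : ∀ a ∈ Ioo (0:ℝ) R,
        (n/2) * (∫ r in a..R, r ^ (n-1) * (V t r)^2) ≤ ∫ r in a..R, r ^ n * Wt t r := by
      intro a ha
      have hc1 : ContinuousOn (fun r : ℝ => n * r ^ (n-1) * g r) (Icc a R) := by
        refine ContinuousOn.mul (continuousOn_const.mul ?_) (hgcont.mono (hIoc_Icc a ha.1))
        exact fun r hr => (Real.continuousAt_rpow_const r (n-1)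
          (Or.inl (ne_of_gt (lt_of_lt_of_le ha.1 hr.1)))).continuousWithinAt
      have hc2 : ContinuousOn (fun r : ℝ => r ^ n * Wt t r) (Icc a R) :=
        (hrpowc.continuousOn).mul ((hWtcont t htIcc).mono (hIoc_Ici a ha.1))
      have hc3 : ContinuousOn (fun r : ℝ => r ^ (n-1) * (V t r)^2) (Icc a R) := by
        refine ContinuousOn.mul ?_ (((hVcont t htIcc).mono (hIoc_Ici a ha.1)).pow 2)
        exact fun r hr => (Real.continuousAt_rpow_const r (n-1)
          (Or.inl (ne_of_gt (lt_of_lt_of_le ha.1 hr.1)))).continuousWithinAt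
      have hi1 : IntervalIntegrable (fun r : ℝ => n * r ^ (n-1) * g r) volume a R :=
        ContinuousOn.intervalIntegrable (by rw [uIcc_of_le ha.2.le]; exact hc1)
      have hi2 : IntervalIntegrable (fun r : ℝ => r ^ n * Wt t r) volume a R :=
        ContinuousOn.intervalIntegrable (by rw [uIcc_of_le ha.2.le]; exact hc2)
      have hi3 : IntervalIntegrable (fun r : ℝ => r ^ (n-1) * (V t r)^2) volume a R :=
        ContinuousOn.intervalIntegrable (by rw [uIcc_of_le ha.2.le]; exact hc3)
      have hIBP : (∫ r in a..R, (n * r ^ (n-1) * g r - r ^ n * Wt t r)) = -(a ^ n * g a) := by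
        have hder : ∀ r ∈ Ioo a R, HasDerivWithinAt (fun r : ℝ => r ^ n * g r)
            (n * r ^ (n-1) * g r - r ^ n * Wt t r) (Ioi r) r := by
          intro r hr
          have hr0 : 0 < r := lt_trans ha.1 hr.1
          have hrpow : HasDerivAt (fun x : ℝ => x ^ n) (n * r ^ (n-1)) r :=
            Real.hasDerivAt_rpow_const (Or.inl (ne_of_gt hr0))
          have hprod := hrpow.mul (hg' r ⟨hr0, hr.2⟩)
          have : HasDerivAt (fun r : ℝ => r ^ n * g r)
              (n * r ^ (n-1) * g r - r ^ n * Wt t r) r := by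
            exact hprod.congr_deriv (by ring)
          exact this.hasDerivWithinAt
        have hcont2 : ContinuousOn (fun r : ℝ => r ^ n * g r) (Icc a R) :=
          (hrpowc.continuousOn).mul (hgcont.mono (hIoc_Icc a ha.1))
        have heq := intervalIntegral.integral_eq_sub_of_hasDeriv_right_of_le ha.2.le
          hcont2 hder (hi1.sub hi2)
        rw [heq, hgR, mul_zero, zero_sub]
      have hsplit : (∫ r in a..R, n * r ^ (n-1) * g r) - (∫ r in a..R, r ^ n * Wt t r)
          = -(a ^ n * g a) := by
        rw [← intervalIntegral.integral_sub hi1 hi2]; exact hIBP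
      have h4 : (∫ r in a..R, n * r ^ (n-1) * g r) ≤ ∫ r in a..R, r ^ n * Wt t r := by
        have := mul_nonneg (hrpow_nn a ha.1.le) (hgnn a)
        linarith
      have h5 : (n/2) * (∫ r in a..R, r ^ (n-1) * (V t r)^2)
          = ∫ r in a..R, (n/2) * (r ^ (n-1) * (V t r)^2) :=
        (intervalIntegral.integral_const_mul _ _).symm
      have h6 : (∫ r in a..R, (n/2) * (r ^ (n-1) * (V t r)^2))
          ≤ ∫ r in a..R, n * r ^ (n-1) * g r := by
        refine intervalIntegral.integral_mono_on ha.2.le (hi3.const_mul _) hi1 ?_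
        intro r hr
        have hrp : (0:ℝ) ≤ r ^ (n-1) := Real.rpow_nonneg (le_trans ha.1.le hr.1) _
        have := hglb r
        nlinarith [mul_nonneg hrp (sub_nonneg.2 (hglb r))]
      linarith
    -- pass to the limit a → 0⁺
    have hint1 : IntegrableOn (fun r : ℝ => r ^ n * Wt t r) (uIcc 0 R) volume := by
      rw [uIcc_of_le hR.le]
      exact (intervalIntegrable_iff_integrableOn_Icc_of_le hR.le).1 (hWtint t htIcc)
    have hint2 : IntegrableOn (fun r : ℝ => r ^ (n-1) * (V t r)^2) (uIcc 0 R) volume := by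
      rw [uIcc_of_le hR.le]
      exact (intervalIntegrable_iff_integrableOn_Icc_of_le hR.le).1 (hV2int t htIcc)
    have hprim1 := intervalIntegral.continuousOn_primitive_interval_left hint1
    have hprim2 := intervalIntegral.continuousOn_primitive_interval_left hint2
    rw [uIcc_of_le hR.le] at hprim1 hprim2
    set φ : ℝ → ℝ := fun a => (∫ r in a..R, r ^ n * Wt t r)
      - (n/2) * ∫ r in a..R, r ^ (n-1) * (V t r)^2 with hφdef
    have hφcont : ContinuousOn φ (Icc 0 R) := hprim1.sub (continuousOn_const.mul hprim2)
    have hφnn : ∀ a ∈ Ioo (0:ℝ) R, 0 ≤ φ a := fun a ha => sub_nonneg.2 (hstep a ha)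
    have h0 : 0 ≤ φ 0 := by
      have hne : (nhdsWithin (0:ℝ) (Ioo (0:ℝ) R)).NeBot := by
        apply mem_closure_iff_nhdsWithin_neBot.1
        rw [closure_Ioo (ne_of_lt hR)]
        exact ⟨le_rfl, hR.le⟩
      have htd : Filter.Tendsto φ (nhdsWithin 0 (Ioo 0 R)) (nhds (φ 0)) :=
        (hφcont 0 ⟨le_rfl, hR.le⟩).mono_left (nhdsWithin_mono 0 Ioo_subset_Icc_self)
      exact ge_of_tendsto htd (Filter.eventually_of_mem self_mem_nhdsWithin hφnn)
    have : φ 0 = (∫ r in (0:ℝ)..R, r ^ n * Wt t r)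
        - (n/2) * ∫ r in (0:ℝ)..R, r ^ (n-1) * (V t r)^2 := rfl
    linarith [h0, this ▸ h0]
  -- Cauchy–Schwarz
  have hA'0 : (0:ℝ) < R ^ (n+2) / (n+2) := by positivity
  have hA'int : (∫ r in (0:ℝ)..R, r ^ (n+1)) = R ^ (n+2) / (n+2) := by
    rw [integral_rpow (Or.inl (by linarith))]
    rw [Real.zero_rpow (by linarith)]
    ring_nf
  have hCS : ∀ t ∈ Icc (0:ℝ) T,
      (H t)^2 ≤ (R ^ (n+2) / (n+2)) * ∫ r in (0:ℝ)..R, r ^ (n-1) * (V t r)^2 := by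
    intro t ht
    set A' := R ^ (n+2) / (n+2) with hA'def
    set lam := H t / A' with hlamdef
    have hf1 : IntervalIntegrable (fun r : ℝ => lam^2 * r ^ (n+1)) volume 0 R :=
      (intervalIntegral.intervalIntegrable_rpow' (by linarith)).const_mul _
    have hf2 : IntervalIntegrable (fun r : ℝ => 2 * lam * (r ^ n * V t r)) volume 0 R :=
      (hVint t ht).const_mul _
    have hf3 : IntervalIntegrable (fun r : ℝ => r ^ (n-1) * (V t r)^2) volume 0 R :=
      hV2int t ht
    have hnn : 0 ≤ ∫ r in (0:ℝ)..R,
        (lam^2 * r ^ (n+1) - 2 * lam * (r ^ n * V t r) + r ^ (n-1) * (V t r)^2) := by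
      refine intervalIntegral.integral_nonneg hR.le fun u hu => ?_
      rcases eq_or_lt_of_le hu.1 with h0 | h0
      · rw [← h0]
        rw [Real.zero_rpow (by positivity : (0:ℝ) < n + 1).ne', Real.zero_rpow hn.ne']
        have : (0:ℝ) ≤ (0:ℝ) ^ (n-1) := Real.rpow_nonneg le_rfl _
        nlinarith [sq_nonneg (V t 0)]
      · have hpq1 : (u:ℝ) ^ ((n+1)/2) * u ^ ((n+1)/2) = u ^ (n+1) := by
          rw [← Real.rpow_add h0]; congr 1; ring
        have hpq2 : (u:ℝ) ^ ((n+1)/2) * u ^ ((n-1)/2) = u ^ n := by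
          rw [← Real.rpow_add h0]; congr 1; ring
        have hpq3 : (u:ℝ) ^ ((n-1)/2) * u ^ ((n-1)/2) = u ^ (n-1) := by
          rw [← Real.rpow_add h0]; congr 1; ring
        have hexp : lam^2 * u ^ (n+1) - 2 * lam * (u ^ n * V t u) + u ^ (n-1) * (V t u)^2
            = (lam * u ^ ((n+1)/2) - u ^ ((n-1)/2) * V t u)^2 := by
          rw [← hpq1, ← hpq2, ← hpq3]; ring
        rw [hexp]
        exact sq_nonneg _
    have hsum : (∫ r in (0:ℝ)..R,
        (lam^2 * r ^ (n+1) - 2 * lam * (r ^ n * V t r) + r ^ (n-1) * (V t r)^2))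
        = lam^2 * A' - 2 * lam * H t + ∫ r in (0:ℝ)..R, r ^ (n-1) * (V t r)^2 := by
      rw [intervalIntegral.integral_add (hf1.sub hf2) hf3,
        intervalIntegral.integral_sub hf1 hf2,
        intervalIntegral.integral_const_mul, intervalIntegral.integral_const_mul, hA'int]
    rw [hsum] at hnn
    have hA'ne : A' ≠ 0 := ne_of_gt hA'0
    have hlam : lam * A' = H t := by rw [hlamdef]; field_simp
    nlinarith [hnn, hA'0, sq_nonneg lam]
  -- monotonicity and positivity of H
  have hH0' : H 0 = H₀ := hH0
  have hB_nn : ∀ t : ℝ, 0 ≤ ∫ r in (0:ℝ)..R, r ^ (n-1) * (V t r)^2 := by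
    intro t
    refine intervalIntegral.integral_nonneg hR.le fun u hu => ?_
    exact mul_nonneg (Real.rpow_nonneg hu.1 _) (sq_nonneg _)
  have hderiv_nn : ∀ t ∈ Ioo (0:ℝ) T, 0 ≤ ∫ r in (0:ℝ)..R, r ^ n * Wt t r :=
    fun t ht => le_trans (mul_nonneg (by linarith) (hB_nn t)) (hkey t ht)
  have hHmono : MonotoneOn H (Icc 0 T) := by
    refine monotoneOn_of_deriv_nonneg (convex_Icc 0 T) hHcont ?_ ?_
    · rw [interior_Icc]
      exact fun t ht => (hHderiv t ht).differentiableAt.differentiableWithinAt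
    · rw [interior_Icc]
      intro t ht
      rw [(hHderiv t ht).deriv]
      exact hderiv_nn t ht
  have hHpos : ∀ t ∈ Icc (0:ℝ) T, H₀ ≤ H t := by
    intro t ht
    have := hHmono ⟨le_rfl, hT0.le⟩ ht ht.1
    rw [hH0'] at this
    exact this
  -- Riccati comparison
  set κ := n * (n+2) / (2 * R ^ (n+2)) with hκdef
  have hκ0 : 0 < κ := by positivity
  have hκA' : κ * (R ^ (n+2) / (n+2)) = n / 2 := by
    rw [hκdef]; field_simp
  set G : ℝ → ℝ := fun t => (H t)⁻¹ + κ * t with hGdef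
  have hHne : ∀ t ∈ Icc (0:ℝ) T, H t ≠ 0 :=
    fun t ht => ne_of_gt (lt_of_lt_of_le hH₀ (hHpos t ht))
  have hGcont : ContinuousOn G (Icc 0 T) :=
    (hHcont.inv₀ hHne).add (continuous_const.mul continuous_id).continuousOn
  have hGderiv : ∀ t ∈ Ioo (0:ℝ) T,
      HasDerivAt G (-(∫ r in (0:ℝ)..R, r ^ n * Wt t r) / (H t)^2 + κ) t := by
    intro t ht
    have h1 := (hHderiv t ht).inv (hHne t (Ioo_subset_Icc_self ht))
    have h2 : HasDerivAt (fun t : ℝ => κ * t) κ t := by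
      simpa using (hasDerivAt_id t).const_mul κ
    exact (h1.add h2).congr_deriv (by ring)
  have hGanti : AntitoneOn G (Icc 0 T) := by
    refine antitoneOn_of_deriv_nonpos (convex_Icc 0 T) hGcont ?_ ?_
    · rw [interior_Icc]
      exact fun t ht => (hGderiv t ht).differentiableAt.differentiableWithinAt
    · rw [interior_Icc]
      intro t ht
      rw [(hGderiv t ht).deriv]
      have htIcc := Ioo_subset_Icc_self ht
      have hHt : 0 < H t := lt_of_lt_of_le hH₀ (hHpos t htIcc)
      have hH2 : (0:ℝ) < (H t)^2 := by positivity
      have hCS' := hCS t htIcc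
      have hk' := hkey t ht
      have hBnn := hB_nn t
      -- κ * (H t)^2 ≤ (n/2) * B ≤ I1
      have hstep1 : κ * (H t)^2 ≤ (n/2) * ∫ r in (0:ℝ)..R, r ^ (n-1) * (V t r)^2 := by
        have := mul_le_mul_of_nonneg_left hCS' hκ0.le
        calc κ * (H t)^2 ≤ κ * ((R ^ (n+2) / (n+2)) * ∫ r in (0:ℝ)..R, r ^ (n-1) * (V t r)^2) :=
              this
          _ = (κ * (R ^ (n+2) / (n+2))) * ∫ r in (0:ℝ)..R, r ^ (n-1) * (V t r)^2 := by ring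
          _ = (n/2) * ∫ r in (0:ℝ)..R, r ^ (n-1) * (V t r)^2 := by rw [hκA']
      have hstep2 : κ * (H t)^2 ≤ ∫ r in (0:ℝ)..R, r ^ n * Wt t r := le_trans hstep1 hk'
      rw [div_add' _ _ _ (ne_of_gt hH2), div_nonpos_iff]
      right
      exact ⟨by linarith, hH2.le⟩
  -- conclusion
  have hfin := hGanti (left_mem_Icc.2 hT0.le) (right_mem_Icc.2 hT0.le) hT0.le
  have hGT : G T = (H T)⁻¹ + κ * T := rfl
  have hG0 : G 0 = (H 0)⁻¹ := by
    rw [hGdef]; simp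
  have hκT : κ * T = (n+2) / ((n+1) * H₀) := by
    rw [hκdef, hT]
    field_simp
  have hHTpos : 0 < H T := lt_of_lt_of_le hH₀ (hHpos T (right_mem_Icc.2 hT0.le))
  have hHTinv : 0 < (H T)⁻¹ := inv_pos.2 hHTpos
  rw [hGT, hG0, hH0', hκT] at hfin
  -- (H T)⁻¹ + (n+2)/((n+1)H₀) ≤ H₀⁻¹, but (n+2)/((n+1)H₀) > H₀⁻¹
  have hgt : (1:ℝ)/H₀ < (n+2) / ((n+1) * H₀) := by
    rw [div_lt_div_iff₀ (by positivity) (by positivity)]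
    nlinarith
  rw [inv_eq_one_div, inv_eq_one_div] at hfin
  have hpos : 0 < 1 / H T := by positivity
  linarith
end
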